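/- arXiv:2410.15146 — 5 statements merged into one kernel-verified Lean document; each statement's English description precedes it below -/
import Mathlib

section
/- Let ε > 0, c ∈ ℝ, and let λ : [0,1] → ℝ be continuous. Let G be the unique continuous solution on D = {(δ,η) : 0 ≤ η ≤ δ, δ + η ≤ 2} of the integral equation G(δ,η) = −(1/(4ε)) ∫_η^δ (c + λ(τ/2)) dτ + (1/(4ε)) ∫_η^δ ∫₀^η (c + λ((τ−s)/2)) G(τ,s) ds dτ. Define k on the triangle T = {(x,ξ) ∈ ℝ² : 0 ≤ ξ ≤ x ≤ 1} by k(x,ξ) := G(x+ξ, x−ξ). Then k is continuously differentiable on T, and satisfies the boundary conditions k(x,0) = 0 and k(x,x) = −(1/(2ε)) ∫₀ˣ (λ(ξ) + c) dξ for all x ∈ [0,1]. -/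
open Set
open MeasureTheory intervalIntegral Asymptotics

open MeasureTheory intervalIntegral Asymptotics

lemma uIcc_abs_sub' {a x τ : ℝ} (h : τ ∈ Set.uIcc a x) : |τ - a| ≤ |x - a| := by
  rcases le_total a x with hax | hax
  · rw [Set.uIcc_of_le hax] at h
    rw [abs_of_nonneg (by linarith [h.1]), abs_of_nonneg (by linarith)]
    linarith [h.2]
  · rw [Set.uIcc_of_ge hax] at h
    rw [abs_of_nonpos (by linarith [h.2]), abs_of_nonpos (by linarith)]
    linarith [h.1]

lemma doublePrimitive_hasFDerivAt (K : ℝ → ℝ → ℝ) (hK : Continuous (Function.uncurry K))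
    (p₀ : ℝ × ℝ) :
    HasFDerivAt (fun p : ℝ × ℝ => ∫ τ in (0:ℝ)..p.1, ∫ s in (0:ℝ)..p.2, K τ s)
      ((∫ s in (0:ℝ)..p₀.2, K p₀.1 s) • ContinuousLinearMap.fst ℝ ℝ ℝ +
       (∫ τ in (0:ℝ)..p₀.1, K τ p₀.2) • ContinuousLinearMap.snd ℝ ℝ ℝ) p₀ := by
  obtain ⟨a₀, b₀⟩ := p₀
  set H : ℝ × ℝ → ℝ := fun q => ∫ s in (0:ℝ)..q.2, K q.1 s with hHdef
  have hH : Continuous H := intervalIntegral.continuous_parametric_primitive_of_continuous hK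
  set A : ℝ := H (a₀, b₀) with hAdef
  set B : ℝ := ∫ τ in (0:ℝ)..a₀, K τ b₀ with hBdef
  have hHc : ∀ b : ℝ, Continuous fun τ => H (τ, b) :=
    fun b => hH.comp (continuous_id.prodMk continuous_const)
  have hKc : ∀ τ : ℝ, Continuous fun s => K τ s :=
    fun τ => hK.comp (continuous_const.prodMk continuous_id)
  have hKc2 : ∀ b : ℝ, Continuous fun τ => K τ b :=
    fun b => hK.comp (continuous_id.prodMk continuous_const)
  -- W2, the part with fixed endpoint a₀
  have hW2' : HasDerivAt (fun b => ∫ τ in (0:ℝ)..a₀, H (τ, b)) B b₀ := by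
    obtain ⟨M, hM⟩ := (isCompact_uIcc.prod isCompact_Icc :
        IsCompact (Set.uIcc (0:ℝ) a₀ ×ˢ Set.Icc (b₀ - 1) (b₀ + 1))).exists_bound_of_continuousOn
      hK.continuousOn
    have := intervalIntegral.hasDerivAt_integral_of_dominated_loc_of_deriv_le
      (F := fun b t => H (t, b)) (F' := fun b t => K t b) (x₀ := b₀) (a := (0:ℝ)) (b := a₀)
      (bound := fun _ => M) (s := Metric.ball b₀ 1) (μ := volume) (Metric.ball_mem_nhds b₀ one_pos)
      (Filter.Eventually.of_forall fun b => ((hHc b).aestronglyMeasurable))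
      ((hHc b₀).intervalIntegrable _ _)
      ((hKc2 b₀).aestronglyMeasurable)
      (Filter.Eventually.of_forall fun t ht x hx => by
        have hd := Metric.mem_ball.1 hx
        rw [Real.dist_eq] at hd
        obtain ⟨h1, h2⟩ := abs_lt.1 hd
        exact hM (t, x) ⟨uIoc_subset_uIcc ht, ⟨by linarith, by linarith⟩⟩)
      (intervalIntegrable_const)
      (Filter.Eventually.of_forall fun t _ x _ =>
        (((hKc t).integral_hasStrictDerivAt 0 x).hasDerivAt : HasDerivAt _ _ _))
    exact this.2
  have hW2 : HasFDerivAt (fun p : ℝ × ℝ => ∫ τ in (0:ℝ)..a₀, H (τ, p.2))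
      (B • ContinuousLinearMap.snd ℝ ℝ ℝ) (a₀, b₀) := by
    have h := hW2'.hasFDerivAt.comp (a₀, b₀) (ContinuousLinearMap.snd ℝ ℝ ℝ).hasFDerivAt
    have hCLM : (ContinuousLinearMap.smulRight (1 : ℝ →L[ℝ] ℝ) B).comp
        (ContinuousLinearMap.snd ℝ ℝ ℝ) = B • ContinuousLinearMap.snd ℝ ℝ ℝ := by
      apply ContinuousLinearMap.ext
      intro v
      simp [mul_comm]
    rw [← hCLM]
    exact h
  -- W1, the moving endpoint part
  have hW1 : HasFDerivAt (fun p : ℝ × ℝ => ∫ τ in a₀..p.1, H (τ, p.2))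
      (A • ContinuousLinearMap.fst ℝ ℝ ℝ) (a₀, b₀) := by
    rw [hasFDerivAt_iff_isLittleO_nhds_zero]
    rw [Asymptotics.isLittleO_iff]
    intro c hc
    obtain ⟨δ, hδpos, hδ⟩ := Metric.continuousAt_iff.1 hH.continuousAt c hc
    filter_upwards [Metric.ball_mem_nhds (0 : ℝ × ℝ) hδpos] with v hv
    have hv' : dist ((a₀, b₀) + v) (a₀, b₀) < δ := by
      simpa [dist_eq_norm] using Metric.mem_ball.1 hv
    set p := (a₀, b₀) + v with hp
    have key : ∀ τ ∈ Set.uIoc a₀ p.1, ‖H (τ, p.2) - A‖ ≤ c := by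
      intro τ hτ
      have h1 : |τ - a₀| ≤ |p.1 - a₀| := uIcc_abs_sub' (uIoc_subset_uIcc hτ)
      have h2 : dist (τ, p.2) (a₀, b₀) ≤ dist p (a₀, b₀) := by
        rw [Prod.dist_eq, Prod.dist_eq]
        exact max_le_max (by rwa [Real.dist_eq, Real.dist_eq]) le_rfl
      have := hδ (lt_of_le_of_lt h2 hv')
      rw [Real.dist_eq] at this
      exact le_of_lt this
    have hint : IntervalIntegrable (fun τ => H (τ, p.2)) volume a₀ p.1 :=
      (hHc p.2).intervalIntegrable _ _
    have heq : (∫ τ in a₀..p.1, (H (τ, p.2) - A)) =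
        (∫ τ in a₀..p.1, H (τ, p.2)) - (p.1 - a₀) * A := by
      rw [intervalIntegral.integral_sub hint intervalIntegrable_const,
        intervalIntegral.integral_const, smul_eq_mul]
    have hbnd : ‖∫ τ in a₀..p.1, (H (τ, p.2) - A)‖ ≤ c * |p.1 - a₀| :=
      intervalIntegral.norm_integral_le_of_norm_le_const key
    have hfst : |p.1 - a₀| ≤ ‖v‖ := by
      have : p.1 - a₀ = v.1 := by simp [hp]
      rw [this, ← Real.norm_eq_abs]
      exact norm_fst_le v
    calc ‖(∫ τ in a₀..p.1, H (τ, p.2)) - (∫ τ in a₀..a₀, H (τ, b₀)) -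
          (A • ContinuousLinearMap.fst ℝ ℝ ℝ) v‖
        = ‖∫ τ in a₀..p.1, (H (τ, p.2) - A)‖ := by
          rw [heq]
          congr 1
          simp [hp]
          ring
      _ ≤ c * |p.1 - a₀| := hbnd
      _ ≤ c * ‖v‖ := by
          apply mul_le_mul_of_nonneg_left hfst (le_of_lt hc)
  -- combine
  have hsum := hW1.add hW2
  have heq : ∀ p : ℝ × ℝ, (∫ τ in (0:ℝ)..p.1, ∫ s in (0:ℝ)..p.2, K τ s) =
      (∫ τ in a₀..p.1, H (τ, p.2)) + ∫ τ in (0:ℝ)..a₀, H (τ, p.2) := by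
    intro p
    have h1 : IntervalIntegrable (fun τ => H (τ, p.2)) volume 0 a₀ :=
      (hHc p.2).intervalIntegrable _ _
    have h2 : IntervalIntegrable (fun τ => H (τ, p.2)) volume a₀ p.1 :=
      (hHc p.2).intervalIntegrable _ _
    rw [add_comm, intervalIntegral.integral_add_adjacent_intervals h1 h2]
  have : HasFDerivAt (fun p : ℝ × ℝ => ∫ τ in (0:ℝ)..p.1, ∫ s in (0:ℝ)..p.2, K τ s)
      (A • ContinuousLinearMap.fst ℝ ℝ ℝ + B • ContinuousLinearMap.snd ℝ ℝ ℝ) (a₀, b₀) :=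
    hsum.congr_of_eventuallyEq (Filter.Eventually.of_forall heq)
  exact this

lemma doublePrimitive_contDiff (K : ℝ → ℝ → ℝ) (hK : Continuous (Function.uncurry K)) :
    ContDiff ℝ 1 (fun p : ℝ × ℝ => ∫ τ in (0:ℝ)..p.1, ∫ s in (0:ℝ)..p.2, K τ s) := by
  rw [contDiff_one_iff_fderiv]
  refine ⟨fun p => (doublePrimitive_hasFDerivAt K hK p).differentiableAt, ?_⟩
  have hfd : (fderiv ℝ fun p : ℝ × ℝ => ∫ τ in (0:ℝ)..p.1, ∫ s in (0:ℝ)..p.2, K τ s) =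
      fun p : ℝ × ℝ => ((∫ s in (0:ℝ)..p.2, K p.1 s) • ContinuousLinearMap.fst ℝ ℝ ℝ +
       (∫ τ in (0:ℝ)..p.1, K τ p.2) • ContinuousLinearMap.snd ℝ ℝ ℝ) :=
    funext fun p => (doublePrimitive_hasFDerivAt K hK p).fderiv
  rw [hfd]
  have hA : Continuous fun p : ℝ × ℝ => ∫ s in (0:ℝ)..p.2, K p.1 s :=
    intervalIntegral.continuous_parametric_primitive_of_continuous hK
  have hB : Continuous fun p : ℝ × ℝ => ∫ τ in (0:ℝ)..p.1, K τ p.2 := by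
    apply intervalIntegral.continuous_parametric_intervalIntegral_of_continuous
      (f := fun (p : ℝ × ℝ) (t : ℝ) => K t p.2) (s := fun p : ℝ × ℝ => p.1)
    · exact hK.comp (continuous_snd.prodMk (continuous_snd.comp continuous_fst))
    · exact continuous_fst
  exact (hA.smul continuous_const).add (hB.smul continuous_const)

/-- The domain `D = {(δ,η) : 0 ≤ η ≤ δ, δ + η ≤ 2}` in characteristic coordinates. -/
def Dcc : Set (ℝ × ℝ) := {p | 0 ≤ p.2 ∧ p.2 ≤ p.1 ∧ p.1 + p.2 ≤ 2}

/-- The triangular domain `T = {(x,ξ) : 0 ≤ ξ ≤ x ≤ 1}` of the backstepping kernel. -/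
def Tri : Set (ℝ × ℝ) := {p | 0 ≤ p.2 ∧ p.2 ≤ p.1 ∧ p.1 ≤ 1}

/-- If `G` is the continuous solution of the integral form of the kernel equations on `D`,
then `k(x,ξ) := G(x+ξ, x−ξ)` is continuously differentiable on the triangle `T` and satisfies
the boundary conditions `k(x,0) = 0` and `k(x,x) = −(1/(2ε)) ∫₀ˣ (λ(ξ)+c) dξ`. -/
theorem kernel_from_integral_equation_C1_and_boundary
    (ε c : ℝ) (hε : 0 < ε) (lam : ℝ → ℝ) (hlam : ContinuousOn lam (Icc 0 1))
    (G : ℝ → ℝ → ℝ)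
    (hG_cont : ContinuousOn (fun p : ℝ × ℝ => G p.1 p.2) Dcc)
    (hG_eq : ∀ p ∈ Dcc, G p.1 p.2 =
      -(1 / (4 * ε)) * (∫ τ in p.2..p.1, (c + lam (τ / 2))) +
      (1 / (4 * ε)) * ∫ τ in p.2..p.1, ∫ s in (0:ℝ)..p.2,
        (c + lam ((τ - s) / 2)) * G τ s) :
    ContDiffOn ℝ 1 (fun p : ℝ × ℝ => G (p.1 + p.2) (p.1 - p.2)) Tri ∧
    (∀ x ∈ Icc (0:ℝ) 1, G (x + 0) (x - 0) = 0) ∧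
    (∀ x ∈ Icc (0:ℝ) 1, G (x + x) (x - x) =
      -(1 / (2 * ε)) * ∫ ξ in (0:ℝ)..x, (lam ξ + c)) := by
  have hεne : ε ≠ 0 := ne_of_gt hε
  have hDclosed : IsClosed Dcc := by
    have : Dcc = {p : ℝ × ℝ | 0 ≤ p.2} ∩
        ({p : ℝ × ℝ | p.2 ≤ p.1} ∩ {p : ℝ × ℝ | p.1 + p.2 ≤ 2}) := rfl
    rw [this]
    exact (isClosed_le continuous_const continuous_snd).inter
      ((isClosed_le continuous_snd continuous_fst).inter
        (isClosed_le (continuous_fst.add continuous_snd) continuous_const))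
  obtain ⟨lamC, hlamC⟩ := ContinuousMap.exists_restrict_eq
    (isClosed_Icc : IsClosed (Icc (0:ℝ) 1)) (⟨_, hlam.restrict⟩ : C(Icc (0:ℝ) 1, ℝ))
  have hlam' : ∀ x ∈ Icc (0:ℝ) 1, lamC x = lam x := fun x hx =>
    DFunLike.congr_fun hlamC ⟨x, hx⟩
  obtain ⟨GC, hGC⟩ := ContinuousMap.exists_restrict_eq hDclosed
    (⟨_, hG_cont.restrict⟩ : C(Dcc, ℝ))
  have hG' : ∀ p ∈ Dcc, GC p = G p.1 p.2 := fun p hp => DFunLike.congr_fun hGC ⟨p, hp⟩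
  set fh : ℝ → ℝ := fun τ => c + lamC (τ / 2) with hfh
  have hfhc : Continuous fh :=
    continuous_const.add (lamC.continuous.comp (continuous_id.div_const 2))
  set F : ℝ → ℝ := fun t => ∫ τ in (0:ℝ)..t, fh τ with hF
  have hFd : ∀ t, HasDerivAt F (fh t) t := fun t => (hfhc.integral_hasStrictDerivAt 0 t).hasDerivAt
  have hFC1 : ContDiff ℝ 1 F := by
    rw [contDiff_one_iff_deriv]
    refine ⟨fun t => (hFd t).differentiableAt, ?_⟩
    have : deriv F = fh := funext fun t => (hFd t).deriv
    rw [this]; exact hfhc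
  set K : ℝ → ℝ → ℝ := fun τ s => (c + lamC ((τ - s) / 2)) * GC (τ, s) with hKdef
  have hK : Continuous (Function.uncurry K) := by
    apply Continuous.mul
    · exact continuous_const.add
        (lamC.continuous.comp ((continuous_fst.sub continuous_snd).div_const 2))
    · exact GC.continuous
  set W : ℝ × ℝ → ℝ := fun p => ∫ τ in (0:ℝ)..p.1, ∫ s in (0:ℝ)..p.2, K τ s with hWdef
  have hWC1 : ContDiff ℝ 1 W := doublePrimitive_contDiff K hK
  set Gh : ℝ × ℝ → ℝ :=
    fun p => -(1/(4*ε)) * (F p.1 - F p.2) + (1/(4*ε)) * (W p - W (p.2, p.2)) with hGh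
  have hGhC1 : ContDiff ℝ 1 Gh := by
    apply ContDiff.add
    · exact contDiff_const.mul ((hFC1.comp contDiff_fst).sub (hFC1.comp contDiff_snd))
    · exact contDiff_const.mul (hWC1.sub (hWC1.comp (contDiff_snd.prodMk contDiff_snd)))
  have hH : Continuous fun q : ℝ × ℝ => ∫ s in (0:ℝ)..q.2, K q.1 s :=
    intervalIntegral.continuous_parametric_primitive_of_continuous hK
  have hEq : ∀ p ∈ Dcc, Gh p = G p.1 p.2 := by
    rintro ⟨d, η⟩ ⟨h0, hle, h2⟩
    dsimp only at h0 hle h2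
    have e1 : (∫ τ in η..d, (c + lam (τ / 2))) = F d - F η := by
      have hcongr : (∫ τ in η..d, (c + lam (τ / 2))) = ∫ τ in η..d, fh τ := by
        apply intervalIntegral.integral_congr
        intro τ hτ
        rw [Set.uIcc_of_le hle] at hτ
        have hm : τ / 2 ∈ Icc (0:ℝ) 1 := ⟨by linarith [hτ.1], by linarith [hτ.2]⟩
        simp [hfh, hlam' _ hm]
      rw [hcongr, hF]
      exact (intervalIntegral.integral_interval_sub_left
        (hfhc.intervalIntegrable 0 d) (hfhc.intervalIntegrable 0 η)).symm
    have e2 : (∫ τ in η..d, ∫ s in (0:ℝ)..η, (c + lam ((τ - s) / 2)) * G τ s)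
        = W (d, η) - W (η, η) := by
      have hcongr : (∫ τ in η..d, ∫ s in (0:ℝ)..η, (c + lam ((τ - s) / 2)) * G τ s)
          = ∫ τ in η..d, ∫ s in (0:ℝ)..η, K τ s := by
        apply intervalIntegral.integral_congr
        intro τ hτ
        rw [Set.uIcc_of_le hle] at hτ
        apply intervalIntegral.integral_congr
        intro s hs
        rw [Set.uIcc_of_le h0] at hs
        have hmem : (τ, s) ∈ Dcc :=
          ⟨hs.1, le_trans hs.2 hτ.1, by simp; linarith [hτ.2, hs.2]⟩
        have hm : (τ - s) / 2 ∈ Icc (0:ℝ) 1 :=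
          ⟨by linarith [hs.2, hτ.1], by linarith [hτ.2, hs.1]⟩
        show (c + lam ((τ - s) / 2)) * G τ s = (c + lamC ((τ - s) / 2)) * GC (τ, s)
        rw [hlam' _ hm, hG' _ hmem]
      rw [hcongr, hWdef]
      have hc1 : IntervalIntegrable (fun τ => ∫ s in (0:ℝ)..η, K τ s) volume 0 d :=
        ((hH.comp (continuous_id.prodMk continuous_const)).intervalIntegrable _ _)
      have hc2 : IntervalIntegrable (fun τ => ∫ s in (0:ℝ)..η, K τ s) volume 0 η :=
        ((hH.comp (continuous_id.prodMk continuous_const)).intervalIntegrable _ _)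
      exact (intervalIntegral.integral_interval_sub_left hc1 hc2).symm
    have h := hG_eq (d, η) ⟨h0, hle, h2⟩
    dsimp only at h
    rw [hGh]
    dsimp only
    rw [h, e1, e2]
  have hGDcc : ContDiffOn ℝ 1 (fun p : ℝ × ℝ => G p.1 p.2) Dcc :=
    hGhC1.contDiffOn.congr fun p hp => (hEq p hp).symm
  have hmaps : MapsTo (fun p : ℝ × ℝ => (p.1 + p.2, p.1 - p.2)) Tri Dcc := by
    rintro ⟨x, ξ⟩ ⟨h1, h2, h3⟩
    refine ⟨?_, ?_, ?_⟩ <;> dsimp only <;> linarith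
  refine ⟨?_, ?_, ?_⟩
  · exact hGDcc.comp
      (((contDiff_fst.add contDiff_snd).prodMk (contDiff_fst.sub contDiff_snd)).contDiffOn) hmaps
  · intro x hx
    rw [add_zero, sub_zero]
    have h := hG_eq (x, x) ⟨hx.1, le_refl x, by simp; linarith [hx.2]⟩
    simpa using h
  · intro x hx
    have hx2 : x + x = 2 * x := by ring
    rw [hx2, sub_self]
    have hmem : ((2 * x : ℝ), (0:ℝ)) ∈ Dcc :=
      ⟨le_refl 0, by simp; linarith [hx.1], by simp; linarith [hx.2]⟩
    have h := hG_eq _ hmem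
    dsimp only at h
    rw [h]
    have hinner : (∫ τ in (0:ℝ)..(2*x), ∫ s in (0:ℝ)..(0:ℝ),
        (c + lam ((τ - s) / 2)) * G τ s) = 0 := by
      simp
    rw [hinner, mul_zero, add_zero]
    have hcomp : (∫ τ in (0:ℝ)..(2*x), (c + lam (τ / 2))) =
        2 * ∫ ξ in (0:ℝ)..x, (c + lam ξ) := by
      have h2 := intervalIntegral.integral_comp_div (a := (0:ℝ)) (b := 2*x) (c := (2:ℝ))
        (f := fun u => c + lam u) two_ne_zero
      have hx2' : 2 * x / 2 = x := by ring
      rw [hx2'] at h2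
      simpa [smul_eq_mul] using h2
    rw [hcomp]
    have hflip : (∫ ξ in (0:ℝ)..x, (c + lam ξ)) = ∫ ξ in (0:ℝ)..x, (lam ξ + c) := by
      apply intervalIntegral.integral_congr
      intro u _
      ring
    rw [hflip]
    field_simp
    ring
end

section
/- Let T = {(x,y) ∈ ℝ² : 0 ≤ y ≤ x ≤ 1}, let f : T → ℝ and g : [0,1] → ℝ be continuous. Then there exists a unique continuous function k : T → ℝ such that (i) for every (x,y) in T with 0 ≤ y < x < 1, the map s ↦ k(x+s, y+s) is differentiable at s = 0 with derivative equal to ∫_y^x k(x,ξ) f(ξ,y) dξ − f(x,y) (i.e., k satisfies k_x(x,y) + k_y(x,y) = ∫_y^x k(x,ξ) f(ξ,y) dξ − f(x,y) in the sense of derivatives along the characteristic direction (1,1)), and (ii) k(x,0) = ∫₀ˣ k(x,y) g(y) dy − g(x) for all x ∈ [0,1]. -/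
open Set

open MeasureTheory intervalIntegral Function

noncomputable section HypKernel

/-- clamp to [0,1] -/
def clI (x : ℝ) : ℝ := max 0 (min x 1)

/-- retraction of the plane onto the triangle `Tri` -/
def rT (p : ℝ × ℝ) : ℝ × ℝ := (clI p.1, max 0 (min p.2 (clI p.1)))

lemma clI_continuous : Continuous clI := by
  unfold clI; fun_prop

lemma rT_continuous : Continuous rT := by
  unfold rT
  exact ((clI_continuous.comp continuous_fst)).prodMk
    (continuous_const.max (continuous_snd.min (clI_continuous.comp continuous_fst)))

lemma clI_mem (x : ℝ) : clI x ∈ Icc (0:ℝ) 1 := by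
  unfold clI
  constructor
  · exact le_max_left _ _
  · simp only [max_le_iff]
    constructor
    · norm_num
    · exact min_le_right _ _

lemma rT_mem (p : ℝ × ℝ) : rT p ∈ Tri := by
  obtain ⟨h0, h1⟩ := clI_mem p.1
  refine ⟨le_max_left _ _, ?_, h1⟩
  simp only [rT, max_le_iff]
  exact ⟨h0, min_le_right _ _⟩

lemma clI_eq {x : ℝ} (h0 : 0 ≤ x) (h1 : x ≤ 1) : clI x = x := by
  unfold clI
  rw [min_eq_left h1, max_eq_right h0]

lemma rT_eq {p : ℝ × ℝ} (hp : p ∈ Tri) : rT p = p := by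
  obtain ⟨h0, h1, h2⟩ := hp
  have hc : clI p.1 = p.1 := clI_eq (h0.trans h1) h2
  simp only [rT, hc, min_eq_left h1, max_eq_right h0]

lemma Tri_isCompact : IsCompact Tri := by
  have hsub : Tri ⊆ Icc ((0:ℝ),(0:ℝ)) ((1:ℝ),(1:ℝ)) := by
    rintro ⟨x, y⟩ ⟨h0, h1, h2⟩
    constructor
    · exact ⟨h0.trans h1, h0⟩
    · exact ⟨h2, h1.trans h2⟩
  have hcl : IsClosed Tri := by
    have h1 : IsClosed {p : ℝ × ℝ | 0 ≤ p.2} := isClosed_le continuous_const continuous_snd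
    have h2 : IsClosed {p : ℝ × ℝ | p.2 ≤ p.1} := isClosed_le continuous_snd continuous_fst
    have h3 : IsClosed {p : ℝ × ℝ | p.1 ≤ 1} := isClosed_le continuous_fst continuous_const
    have : Tri = {p : ℝ × ℝ | 0 ≤ p.2} ∩ ({p | p.2 ≤ p.1} ∩ {p | p.1 ≤ 1}) := by
      ext p; simp [Tri, and_assoc]
    rw [this]
    exact h1.inter (h2.inter h3)
  exact isCompact_Icc.of_isClosed_subset hcl hsub
/-- inner characteristic integrand: `B(c,t) = ∫_t^{c+t} u(c+t,ξ) F(ξ,t) dξ − F(c+t,t)`,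
written with normalized integration limits. -/
def Bfun (F : ℝ → ℝ → ℝ) (u : ℝ × ℝ → ℝ) (c t : ℝ) : ℝ :=
  (∫ σ in (0:ℝ)..c, u (c + t, σ + t) * F (σ + t) t) - F (c + t) t

/-- The integral operator on the triangle. -/
def Psi (F : ℝ → ℝ → ℝ) (G : ℝ → ℝ) (u : ℝ × ℝ → ℝ) (p : ℝ × ℝ) : ℝ :=
  -G (p.1 - p.2) + (∫ η in (0:ℝ)..(p.1 - p.2), u (p.1 - p.2, η) * G η)
    + ∫ t in (0:ℝ)..p.2, Bfun F u (p.1 - p.2) t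

lemma Bfun_eq (F : ℝ → ℝ → ℝ) (u : ℝ × ℝ → ℝ) (c t : ℝ) :
    Bfun F u c t = (∫ ξ in t..(c + t), u (c + t, ξ) * F ξ t) - F (c + t) t := by
  unfold Bfun
  congr 1
  have := intervalIntegral.integral_comp_add_right (a := (0:ℝ)) (b := c)
    (fun ξ => u (c + t, ξ) * F ξ t) t
  simpa using this

lemma Bfun_continuous {F : ℝ → ℝ → ℝ} (hF : Continuous fun p : ℝ × ℝ => F p.1 p.2)
    {u : ℝ × ℝ → ℝ} (hu : Continuous u) :
    Continuous fun z : ℝ × ℝ => Bfun F u z.1 z.2 := by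
  have h1 : Continuous fun z : ℝ × ℝ =>
      (∫ σ in (0:ℝ)..z.1, u (z.1 + z.2, σ + z.2) * F (σ + z.2) z.2) := by
    have hunc : Continuous (Function.uncurry
        (fun (z : ℝ × ℝ) (σ : ℝ) => u (z.1 + z.2, σ + z.2) * F (σ + z.2) z.2)) := by
      apply Continuous.mul
      · exact hu.comp ((continuous_fst.comp continuous_fst |>.add
          (continuous_snd.comp continuous_fst)).prodMk
          (continuous_snd.add (continuous_snd.comp continuous_fst)))
      · exact hF.comp ((continuous_snd.add (continuous_snd.comp continuous_fst)).prodMk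
          (continuous_snd.comp continuous_fst))
    exact intervalIntegral.continuous_parametric_intervalIntegral_of_continuous hunc continuous_fst
  have h2 : Continuous fun z : ℝ × ℝ => F (z.1 + z.2) z.2 :=
    hF.comp ((continuous_fst.add continuous_snd).prodMk continuous_snd)
  exact h1.sub h2

lemma Bfun_continuous_t {F : ℝ → ℝ → ℝ} (hF : Continuous fun p : ℝ × ℝ => F p.1 p.2)
    {u : ℝ × ℝ → ℝ} (hu : Continuous u) (c : ℝ) :
    Continuous fun t : ℝ => Bfun F u c t := by
  have h := (Bfun_continuous hF hu).comp
    (continuous_const.prodMk continuous_id : Continuous fun t : ℝ => ((c, t) : ℝ × ℝ))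
  simpa [Function.comp_def] using h

lemma Psi_continuous {F : ℝ → ℝ → ℝ} (hF : Continuous fun p : ℝ × ℝ => F p.1 p.2)
    {G : ℝ → ℝ} (hG : Continuous G) {u : ℝ × ℝ → ℝ} (hu : Continuous u) :
    Continuous (Psi F G u) := by
  have h0 : Continuous fun p : ℝ × ℝ => -G (p.1 - p.2) :=
    (hG.comp (continuous_fst.sub continuous_snd)).neg
  have h1 : Continuous fun p : ℝ × ℝ =>
      (∫ η in (0:ℝ)..(p.1 - p.2), u (p.1 - p.2, η) * G η) := by
    have hunc : Continuous (Function.uncurry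
        (fun (p : ℝ × ℝ) (η : ℝ) => u (p.1 - p.2, η) * G η)) := by
      apply Continuous.mul
      · exact hu.comp (((continuous_fst.comp continuous_fst).sub
          (continuous_snd.comp continuous_fst)).prodMk continuous_snd)
      · exact hG.comp continuous_snd
    exact intervalIntegral.continuous_parametric_intervalIntegral_of_continuous hunc
      (continuous_fst.sub continuous_snd)
  have h2 : Continuous fun p : ℝ × ℝ => (∫ t in (0:ℝ)..p.2, Bfun F u (p.1 - p.2) t) := by
    have hunc : Continuous (Function.uncurry
        (fun (p : ℝ × ℝ) (t : ℝ) => Bfun F u (p.1 - p.2) t)) := by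
      have h := (Bfun_continuous hF hu).comp
        ((((continuous_fst.comp continuous_fst).sub
          (continuous_snd.comp continuous_fst)).prodMk continuous_snd) :
          Continuous fun q : (ℝ × ℝ) × ℝ => ((q.1.1 - q.1.2, q.2) : ℝ × ℝ))
      simpa [Function.comp_def, Function.uncurry_def] using h
    exact intervalIntegral.continuous_parametric_intervalIntegral_of_continuous hunc
      continuous_snd
  exact (h0.add h1).add h2

lemma Psi_char (F : ℝ → ℝ → ℝ) (G : ℝ → ℝ) (u : ℝ × ℝ → ℝ) (x y : ℝ) :
    Psi F G u (x, y) = Psi F G u (x - y, 0) + ∫ t in (0:ℝ)..y, Bfun F u (x - y) t := by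
  simp [Psi]

/-- antiderivative bound for decreasing-power integrals -/
lemma integral_pow_decr {K a b : ℝ} (hab : a ≤ b) (hbK : b ≤ K) (n : ℕ) :
    (∫ η in a..b, (K - η) ^ n) ≤ (K - a) ^ (n + 1) / (n + 1) := by
  have hder : ∀ η ∈ uIcc a b, HasDerivAt (fun η => -((K - η) ^ (n + 1)) / (n + 1))
      ((K - η) ^ n) η := by
    intro η _
    have h1 : HasDerivAt (fun η : ℝ => K - η) (-1) η := (hasDerivAt_id η).const_sub K
    have h2 := (h1.fun_pow (n + 1)).neg.div_const ((n : ℝ) + 1)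
    refine h2.congr_deriv ?_
    all_goals (push_cast; try field_simp; try ring)
  have heq := intervalIntegral.integral_eq_sub_of_hasDerivAt hder
    ((by fun_prop : Continuous fun η : ℝ => (K - η) ^ n).intervalIntegrable a b)
  rw [heq]
  have h1 : (0:ℝ) ≤ (K - b) ^ (n + 1) := pow_nonneg (by linarith) _
  have h2 : (0:ℝ) < (n : ℝ) + 1 := by positivity
  rw [div_sub_div_same, div_le_div_iff_of_pos_right h2]
  linarith

/-- antiderivative bound for increasing-power integrals -/
lemma integral_pow_incr {K a b : ℝ} (hab : a ≤ b) (haK : 0 ≤ K + a) (n : ℕ) :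
    (∫ t in a..b, (K + t) ^ n) ≤ (K + b) ^ (n + 1) / (n + 1) := by
  have hder : ∀ t ∈ uIcc a b, HasDerivAt (fun t => ((K + t) ^ (n + 1)) / (n + 1))
      ((K + t) ^ n) t := by
    intro t _
    have h1 : HasDerivAt (fun t : ℝ => K + t) 1 t := (hasDerivAt_id t).const_add K
    have h2 := (h1.fun_pow (n + 1)).div_const ((n : ℝ) + 1)
    refine h2.congr_deriv ?_
    all_goals (push_cast; try field_simp; try ring)
  have heq := intervalIntegral.integral_eq_sub_of_hasDerivAt hder
    ((by fun_prop : Continuous fun t : ℝ => (K + t) ^ n).intervalIntegrable a b)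
  rw [heq]
  have h1 : (0:ℝ) ≤ (K + a) ^ (n + 1) := pow_nonneg haK _
  have h2 : (0:ℝ) < (n : ℝ) + 1 := by positivity
  rw [div_sub_div_same, div_le_div_iff_of_pos_right h2]
  linarith

/-- The key contraction step estimate for the operator `Psi`. -/
lemma Psi_step {F : ℝ → ℝ → ℝ} {G : ℝ → ℝ}
    (hF : Continuous fun p : ℝ × ℝ => F p.1 p.2) (hG : Continuous G)
    {MF MG : ℝ} (hMF : ∀ a b : ℝ, |F a b| ≤ MF) (hMG : ∀ a : ℝ, |G a| ≤ MG)
    {u v : ℝ × ℝ → ℝ} (hu : Continuous u) (hv : Continuous v)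
    {A : ℝ} (hA : 0 ≤ A) (n : ℕ)
    (hd : ∀ q ∈ Tri, |u q - v q| ≤ A * (2 * q.1 - q.2) ^ n / n.factorial)
    {p : ℝ × ℝ} (hp : p ∈ Tri) :
    |Psi F G u p - Psi F G v p|
      ≤ A * (MG + 2 * MF) * (2 * p.1 - p.2) ^ (n + 1) / (n + 1).factorial := by
  obtain ⟨x, y⟩ := p
  obtain ⟨h0, h1, h2⟩ := hp
  simp only at h0 h1 h2 ⊢
  set c := x - y with hcdef
  have hc0 : 0 ≤ c := by simp [hcdef]; linarith
  have hcx : c ≤ x := by simp [hcdef]; linarith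
  have hc1 : c ≤ 1 := hcx.trans h2
  have hMF0 : 0 ≤ MF := (abs_nonneg _).trans (hMF 0 0)
  have hMG0 : 0 ≤ MG := (abs_nonneg _).trans (hMG 0)
  have hfac : (0:ℝ) < n.factorial := by positivity
  set w := 2 * x - y with hwdef
  have hw0 : 0 ≤ w := by simp [hwdef]; linarith
  have hw2 : w ≤ 2 := by simp [hwdef]; linarith
  have h2cw : 2 * c ≤ w := by simp [hwdef, hcdef]; linarith
  have h2cyw : 2 * c + y = w := by simp [hwdef, hcdef]; ring
  -- continuity facts
  have hcu : ∀ t : ℝ, Continuous fun σ : ℝ => u (c + t, σ + t) * F (σ + t) t := by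
    intro t
    exact (hu.comp (continuous_const.prodMk ((continuous_id.add continuous_const)))).mul
      (hF.comp ((continuous_id.add continuous_const).prodMk continuous_const))
  have hcv : ∀ t : ℝ, Continuous fun σ : ℝ => v (c + t, σ + t) * F (σ + t) t := by
    intro t
    exact (hv.comp (continuous_const.prodMk ((continuous_id.add continuous_const)))).mul
      (hF.comp ((continuous_id.add continuous_const).prodMk continuous_const))
  have hgu : Continuous fun η : ℝ => u (c, η) * G η :=
    (hu.comp (continuous_const.prodMk continuous_id)).mul hG
  have hgv : Continuous fun η : ℝ => v (c, η) * G η :=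
    (hv.comp (continuous_const.prodMk continuous_id)).mul hG
  -- inner difference as single integral
  have einner : ∀ t : ℝ, Bfun F u c t - Bfun F v c t
      = ∫ σ in (0:ℝ)..c, (u (c + t, σ + t) - v (c + t, σ + t)) * F (σ + t) t := by
    intro t
    simp only [Bfun]
    rw [show (∫ σ in (0:ℝ)..c, (u (c + t, σ + t) - v (c + t, σ + t)) * F (σ + t) t)
        = ∫ σ in (0:ℝ)..c, (u (c + t, σ + t) * F (σ + t) t - v (c + t, σ + t) * F (σ + t) t)
        from by congr 1; funext σ; ring]
    rw [intervalIntegral.integral_sub ((hcu t).intervalIntegrable _ _)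
      ((hcv t).intervalIntegrable _ _)]
    ring
  have hJcont : Continuous fun t : ℝ => Bfun F u c t - Bfun F v c t :=
    (Bfun_continuous_t hF hu c).sub (Bfun_continuous_t hF hv c)
  -- difference formula
  have hdiff : Psi F G u (x, y) - Psi F G v (x, y)
      = (∫ η in (0:ℝ)..c, (u (c, η) - v (c, η)) * G η)
        + ∫ t in (0:ℝ)..y, (Bfun F u c t - Bfun F v c t) := by
    simp only [Psi]
    rw [show (∫ η in (0:ℝ)..c, (u (c, η) - v (c, η)) * G η)
        = ∫ η in (0:ℝ)..c, (u (c, η) * G η - v (c, η) * G η)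
        from by congr 1; funext η; ring]
    rw [intervalIntegral.integral_sub (hgu.intervalIntegrable _ _) (hgv.intervalIntegrable _ _)]
    rw [intervalIntegral.integral_sub ((Bfun_continuous_t hF hu c).intervalIntegrable _ _)
      ((Bfun_continuous_t hF hv c).intervalIntegrable _ _)]
    simp only [hcdef]
    ring
  -- bound for the boundary (g) term
  have hb1 : |∫ η in (0:ℝ)..c, (u (c, η) - v (c, η)) * G η|
      ≤ A * MG * w ^ (n + 1) / (((n:ℝ) + 1) * n.factorial) := by
    have step1 := intervalIntegral.abs_integral_le_integral_abs (μ := volume) hc0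
      (f := fun η => (u (c, η) - v (c, η)) * G η)
    have step2 : (∫ η in (0:ℝ)..c, |(u (c, η) - v (c, η)) * G η|)
        ≤ ∫ η in (0:ℝ)..c, (A * MG / n.factorial) * (2 * c - η) ^ n := by
      apply intervalIntegral.integral_mono_on hc0
      · exact (((hu.comp (continuous_const.prodMk continuous_id)).sub
          (hv.comp (continuous_const.prodMk continuous_id))).mul hG).abs.intervalIntegrable _ _
      · exact (by fun_prop : Continuous fun η : ℝ =>
          (A * MG / n.factorial) * (2 * c - η) ^ n).intervalIntegrable _ _
      · intro η hη
        have hmem : ((c, η) : ℝ × ℝ) ∈ Tri := ⟨hη.1, hη.2, hc1⟩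
        have hd1 := hd _ hmem
        simp only at hd1
        rw [abs_mul]
        have hpow0 : (0:ℝ) ≤ (2 * c - η) ^ n := by
          apply pow_nonneg; rcases hη with ⟨hη1, hη2⟩; linarith
        calc |u (c, η) - v (c, η)| * |G η|
            ≤ (A * (2 * c - η) ^ n / n.factorial) * MG := by
              apply mul_le_mul hd1 (hMG η) (abs_nonneg _)
              positivity
          _ = (A * MG / n.factorial) * (2 * c - η) ^ n := by ring
    have step3 : (∫ η in (0:ℝ)..c, (A * MG / n.factorial) * (2 * c - η) ^ n)
        ≤ (A * MG / n.factorial) * ((2 * c) ^ (n + 1) / ((n:ℝ) + 1)) := by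
      rw [intervalIntegral.integral_const_mul]
      apply mul_le_mul_of_nonneg_left _ (by positivity)
      have := integral_pow_decr (K := 2 * c) (a := 0) (b := c) hc0 (by linarith) n
      simpa using this
    have step4 : (A * MG / n.factorial) * ((2 * c) ^ (n + 1) / ((n:ℝ) + 1))
        ≤ A * MG * w ^ (n + 1) / (((n:ℝ) + 1) * n.factorial) := by
      have hpow : (2 * c) ^ (n + 1) ≤ w ^ (n + 1) :=
        pow_le_pow_left₀ (by linarith) h2cw _
      calc (A * MG / n.factorial) * ((2 * c) ^ (n + 1) / ((n:ℝ) + 1))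
          ≤ (A * MG / n.factorial) * (w ^ (n + 1) / ((n:ℝ) + 1)) := by
            apply mul_le_mul_of_nonneg_left _ (by positivity)
            apply div_le_div_of_nonneg_right ?_ (by positivity)
            exact hpow
        _ = A * MG * w ^ (n + 1) / (((n:ℝ) + 1) * n.factorial) := by
            rw [div_mul_div_comm]; ring_nf
    linarith
  -- bound for the double-integral (f) term
  have hJb : ∀ t ∈ Icc (0:ℝ) y, |Bfun F u c t - Bfun F v c t|
      ≤ (A * MF / n.factorial) * ((2 * c + t) ^ (n + 1) / ((n:ℝ) + 1)) := by
    intro t ht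
    rw [einner t]
    have step1 := intervalIntegral.abs_integral_le_integral_abs (μ := volume) hc0
      (f := fun σ => (u (c + t, σ + t) - v (c + t, σ + t)) * F (σ + t) t)
    have step2 : (∫ σ in (0:ℝ)..c, |(u (c + t, σ + t) - v (c + t, σ + t)) * F (σ + t) t|)
        ≤ ∫ σ in (0:ℝ)..c, (A * MF / n.factorial) * (2 * c + t - σ) ^ n := by
      apply intervalIntegral.integral_mono_on hc0
      · have : Continuous fun σ : ℝ => (u (c + t, σ + t) - v (c + t, σ + t)) * F (σ + t) t :=
          ((hu.comp (continuous_const.prodMk (continuous_id.add continuous_const))).sub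
            (hv.comp (continuous_const.prodMk (continuous_id.add continuous_const)))).mul
            (hF.comp ((continuous_id.add continuous_const).prodMk continuous_const))
        exact this.abs.intervalIntegrable _ _
      · exact (by fun_prop : Continuous fun σ : ℝ =>
          (A * MF / n.factorial) * (2 * c + t - σ) ^ n).intervalIntegrable _ _
      · intro σ hσ
        have hmem : ((c + t, σ + t) : ℝ × ℝ) ∈ Tri := by
          refine ⟨by rcases hσ with ⟨a, b⟩; rcases ht with ⟨e, f⟩; simp; linarith, ?_, ?_⟩
          · simp; rcases hσ with ⟨a, b⟩; linarith
          · simp only; rcases ht with ⟨e, f⟩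
            have : c + t ≤ c + y := by linarith
            simp only [hcdef] at this ⊢; linarith
        have hd1 := hd _ hmem
        simp only at hd1
        rw [abs_mul]
        have harg : 2 * (c + t) - (σ + t) = 2 * c + t - σ := by ring
        rw [harg] at hd1
        have hpow0 : (0:ℝ) ≤ (2 * c + t - σ) ^ n := by
          apply pow_nonneg; rcases hσ with ⟨a, b⟩; rcases ht with ⟨e, f⟩; linarith
        calc |u (c + t, σ + t) - v (c + t, σ + t)| * |F (σ + t) t|
            ≤ (A * (2 * c + t - σ) ^ n / n.factorial) * MF := by
              apply mul_le_mul hd1 (hMF _ _) (abs_nonneg _)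
              positivity
          _ = (A * MF / n.factorial) * (2 * c + t - σ) ^ n := by ring
    have step3 : (∫ σ in (0:ℝ)..c, (A * MF / n.factorial) * (2 * c + t - σ) ^ n)
        ≤ (A * MF / n.factorial) * ((2 * c + t) ^ (n + 1) / ((n:ℝ) + 1)) := by
      rw [intervalIntegral.integral_const_mul]
      apply mul_le_mul_of_nonneg_left _ (by positivity)
      have := integral_pow_decr (K := 2 * c + t) (a := 0) (b := c) hc0
        (by rcases ht with ⟨e, f⟩; linarith) n
      simpa using this
    linarith
  have hb2 : |∫ t in (0:ℝ)..y, (Bfun F u c t - Bfun F v c t)|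
      ≤ A * 2 * MF * w ^ (n + 1) / (((n:ℝ) + 1) * n.factorial) := by
    have step1 := intervalIntegral.abs_integral_le_integral_abs (μ := volume) h0
      (f := fun t => Bfun F u c t - Bfun F v c t)
    have step2 : (∫ t in (0:ℝ)..y, |Bfun F u c t - Bfun F v c t|)
        ≤ ∫ t in (0:ℝ)..y, (A * MF / (n.factorial * ((n:ℝ) + 1))) * (2 * c + t) ^ (n + 1) := by
      apply intervalIntegral.integral_mono_on h0
      · exact hJcont.abs.intervalIntegrable _ _
      · exact (by fun_prop : Continuous fun t : ℝ =>
          (A * MF / (n.factorial * ((n:ℝ) + 1))) * (2 * c + t) ^ (n + 1)).intervalIntegrable _ _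
      · intro t ht
        have := hJb t ht
        calc |Bfun F u c t - Bfun F v c t|
            ≤ (A * MF / n.factorial) * ((2 * c + t) ^ (n + 1) / ((n:ℝ) + 1)) := this
          _ = (A * MF / (n.factorial * ((n:ℝ) + 1))) * (2 * c + t) ^ (n + 1) := by
              field_simp
    have step3 : (∫ t in (0:ℝ)..y, (A * MF / (n.factorial * ((n:ℝ) + 1))) * (2 * c + t) ^ (n + 1))
        ≤ (A * MF / (n.factorial * ((n:ℝ) + 1))) * ((2 * c + y) ^ (n + 2) / ((n:ℝ) + 2)) := by
      rw [intervalIntegral.integral_const_mul]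
      apply mul_le_mul_of_nonneg_left _ (by positivity)
      have := integral_pow_incr (K := 2 * c) (a := 0) (b := y) h0 (by linarith) (n + 1)
      have hcast : ((n:ℝ) + 1 + 1) = (n:ℝ) + 2 := by ring
      push_cast at this
      simpa [hcast] using this
    have step4 : (A * MF / (n.factorial * ((n:ℝ) + 1))) * ((2 * c + y) ^ (n + 2) / ((n:ℝ) + 2))
        ≤ A * 2 * MF * w ^ (n + 1) / (((n:ℝ) + 1) * n.factorial) := by
      rw [h2cyw]
      have hwpow : w ^ (n + 2) ≤ 2 * w ^ (n + 1) := by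
        have : w ^ (n + 2) = w ^ (n + 1) * w := by ring
        rw [this]
        nlinarith [pow_nonneg hw0 (n + 1)]
      have hn2 : (1:ℝ) ≤ (n:ℝ) + 2 := by
        have := Nat.cast_nonneg (α := ℝ) n; linarith
      calc (A * MF / (n.factorial * ((n:ℝ) + 1))) * (w ^ (n + 2) / ((n:ℝ) + 2))
          ≤ (A * MF / (n.factorial * ((n:ℝ) + 1))) * (2 * w ^ (n + 1)) := by
            apply mul_le_mul_of_nonneg_left _ (by positivity)
            rw [div_le_iff₀ (by positivity)]
            nlinarith [pow_nonneg hw0 (n + 1), pow_nonneg hw0 (n + 2)]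
        _ = A * 2 * MF * w ^ (n + 1) / (((n:ℝ) + 1) * n.factorial) := by
            rw [div_mul_eq_mul_div]; ring_nf
    linarith
  -- combine
  have hfs : ((n + 1).factorial : ℝ) = ((n:ℝ) + 1) * n.factorial := by
    rw [Nat.factorial_succ]; push_cast; ring
  calc |Psi F G u (x, y) - Psi F G v (x, y)|
      ≤ |∫ η in (0:ℝ)..c, (u (c, η) - v (c, η)) * G η|
        + |∫ t in (0:ℝ)..y, (Bfun F u c t - Bfun F v c t)| := by
        rw [hdiff]; exact abs_add_le _ _
    _ ≤ A * MG * w ^ (n + 1) / (((n:ℝ) + 1) * n.factorial)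
        + A * 2 * MF * w ^ (n + 1) / (((n:ℝ) + 1) * n.factorial) := by linarith
    _ = A * (MG + 2 * MF) * w ^ (n + 1) / (((n:ℝ) + 1) * n.factorial) := by ring
    _ = A * (MG + 2 * MF) * (2 * x - y) ^ (n + 1) / ((n + 1).factorial : ℝ) := by
        rw [hfs, hwdef]

end HypKernel

/-- Well-posedness of the kernel equations for the first-order hyperbolic PIDE:
there is a unique continuous `k` on `T` satisfying
`k_x + k_y = ∫_y^x k(x,ξ) f(ξ,y) dξ − f(x,y)` (as a derivative along the characteristic
direction `(1,1)`) together with `k(x,0) = ∫₀ˣ k(x,y) g(y) dy − g(x)`. -/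
theorem hyperbolic_kernel_wellposed
    (f : ℝ → ℝ → ℝ) (hf : ContinuousOn (fun p : ℝ × ℝ => f p.1 p.2) Tri)
    (g : ℝ → ℝ) (hg : ContinuousOn g (Icc 0 1)) :
    ∃ k : ℝ → ℝ → ℝ,
      (ContinuousOn (fun p : ℝ × ℝ => k p.1 p.2) Tri ∧
        (∀ x y : ℝ, 0 ≤ y → y < x → x < 1 →
          HasDerivAt (fun s => k (x + s) (y + s))
            ((∫ ξ in y..x, k x ξ * f ξ y) - f x y) 0) ∧
        (∀ x ∈ Icc (0:ℝ) 1, k x 0 = (∫ y in (0:ℝ)..x, k x y * g y) - g x)) ∧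
      ∀ k' : ℝ → ℝ → ℝ,
        (ContinuousOn (fun p : ℝ × ℝ => k' p.1 p.2) Tri ∧
          (∀ x y : ℝ, 0 ≤ y → y < x → x < 1 →
            HasDerivAt (fun s => k' (x + s) (y + s))
              ((∫ ξ in y..x, k' x ξ * f ξ y) - f x y) 0) ∧
          (∀ x ∈ Icc (0:ℝ) 1, k' x 0 = (∫ y in (0:ℝ)..x, k' x y * g y) - g x)) →
        ∀ x y : ℝ, (x, y) ∈ Tri → k' x y = k x y := by
  classical
  -- globally defined clamped versions of the data
  set F : ℝ → ℝ → ℝ := fun a b => (fun p : ℝ × ℝ => f p.1 p.2) (rT (a, b)) with hFdef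
  set G : ℝ → ℝ := fun a => g (clI a) with hGdef
  have hFc : Continuous fun p : ℝ × ℝ => F p.1 p.2 := by
    have h := hf.comp_continuous rT_continuous rT_mem
    simpa [Function.comp_def] using h
  have hGc : Continuous G := hg.comp_continuous clI_continuous clI_mem
  have hFeq : ∀ q : ℝ × ℝ, q ∈ Tri → F q.1 q.2 = f q.1 q.2 := by
    intro q hq
    simp only [hFdef]
    rw [rT_eq hq]
  have hGeq : ∀ a : ℝ, a ∈ Icc (0:ℝ) 1 → G a = g a := by
    intro a ha
    simp only [hGdef, clI_eq ha.1 ha.2]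
  obtain ⟨MF, hMF⟩ : ∃ MF : ℝ, ∀ a b : ℝ, |F a b| ≤ MF := by
    obtain ⟨C, hC⟩ := Tri_isCompact.exists_bound_of_continuousOn hf
    refine ⟨C, fun a b => ?_⟩
    simpa [hFdef, Real.norm_eq_abs] using hC _ (rT_mem (a, b))
  obtain ⟨MG, hMG⟩ : ∃ MG : ℝ, ∀ a : ℝ, |G a| ≤ MG := by
    obtain ⟨C, hC⟩ := (isCompact_Icc (a := (0:ℝ)) (b := 1)).exists_bound_of_continuousOn hg
    refine ⟨C, fun a => ?_⟩
    simpa [hGdef, Real.norm_eq_abs] using hC _ (clI_mem a)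
  have hMF0 : 0 ≤ MF := (abs_nonneg _).trans (hMF 0 0)
  have hMG0 : 0 ≤ MG := (abs_nonneg _).trans (hMG 0)
  -- the operator, bundled on bounded continuous functions
  obtain ⟨Φ, hΦ⟩ : ∃ Φ : BoundedContinuousFunction (ℝ × ℝ) ℝ →
      BoundedContinuousFunction (ℝ × ℝ) ℝ,
      ∀ u p, Φ u p = Psi F G (⇑u) (rT p) := by
    have hcont : ∀ u : BoundedContinuousFunction (ℝ × ℝ) ℝ,
        Continuous fun p => Psi F G (⇑u) (rT p) :=
      fun u => (Psi_continuous hFc hGc u.continuous).comp rT_continuous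
    have hbdd : ∀ u : BoundedContinuousFunction (ℝ × ℝ) ℝ,
        ∃ C, ∀ p, ‖Psi F G (⇑u) (rT p)‖ ≤ C := by
      intro u
      obtain ⟨C, hC⟩ := Tri_isCompact.exists_bound_of_continuousOn
        (Psi_continuous hFc hGc u.continuous).continuousOn
      exact ⟨C, fun p => hC _ (rT_mem p)⟩
    exact ⟨fun u => BoundedContinuousFunction.ofNormedAddCommGroup _ (hcont u)
      (hbdd u).choose (hbdd u).choose_spec, fun u p => rfl⟩
  have hΦTri : ∀ (u : BoundedContinuousFunction (ℝ × ℝ) ℝ) (q : ℝ × ℝ), q ∈ Tri →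
      Φ u q = Psi F G (⇑u) q := fun u q hq => by rw [hΦ, rT_eq hq]
  set M : ℝ := MG + 2 * MF with hMdef
  have hM0 : 0 ≤ M := by simp only [hMdef]; linarith
  -- iterated pointwise estimates
  have iter : ∀ n : ℕ, ∀ u v : BoundedContinuousFunction (ℝ × ℝ) ℝ, ∀ q ∈ Tri,
      |(Φ^[n] u) q - (Φ^[n] v) q|
        ≤ (‖u - v‖ * M ^ n) * (2 * q.1 - q.2) ^ n / n.factorial := by
    intro n
    induction n with
    | zero =>
      intro u v q _
      have h := BoundedContinuousFunction.norm_coe_le_norm (u - v) q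
      simpa [Real.norm_eq_abs] using h
    | succ n ih =>
      intro u v q hq
      rw [Function.iterate_succ_apply' Φ n u, Function.iterate_succ_apply' Φ n v,
        hΦTri _ _ hq, hΦTri _ _ hq]
      have hstep := Psi_step hFc hGc hMF hMG
        (Φ^[n] u).continuous (Φ^[n] v).continuous
        (A := ‖u - v‖ * M ^ n) (by positivity) n
        (fun q' hq' => ih u v q' hq') hq
      calc |Psi F G (⇑(Φ^[n] u)) q - Psi F G (⇑(Φ^[n] v)) q|
          ≤ (‖u - v‖ * M ^ n) * (MG + 2 * MF) * (2 * q.1 - q.2) ^ (n + 1)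
            / (n + 1).factorial := hstep
        _ = (‖u - v‖ * M ^ (n + 1)) * (2 * q.1 - q.2) ^ (n + 1) / (n + 1).factorial := by
            rw [hMdef]; ring
  -- distance estimate for iterates
  have dist_iter : ∀ n : ℕ, 1 ≤ n → ∀ u v : BoundedContinuousFunction (ℝ × ℝ) ℝ,
      dist (Φ^[n] u) (Φ^[n] v) ≤ ((2 * M) ^ n / n.factorial) * dist u v := by
    intro n hn u v
    have hC0 : 0 ≤ ((2 * M) ^ n / n.factorial) * dist u v := by positivity
    rw [BoundedContinuousFunction.dist_le hC0]
    intro p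
    obtain ⟨m, rfl⟩ : ∃ m, n = m + 1 := ⟨n - 1, (Nat.succ_pred_eq_of_pos hn).symm⟩
    have hval : ∀ w : BoundedContinuousFunction (ℝ × ℝ) ℝ,
        (Φ^[m + 1] w) p = (Φ^[m + 1] w) (rT p) := by
      intro w
      rw [Function.iterate_succ_apply' Φ m w, hΦ, hΦ, rT_eq (rT_mem p)]
    rw [Real.dist_eq, hval u, hval v]
    have hq := rT_mem p
    have h1 := iter (m + 1) u v (rT p) hq
    have hle : (2 * (rT p).1 - (rT p).2) ^ (m + 1) ≤ 2 ^ (m + 1) := by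
      apply pow_le_pow_left₀
      · obtain ⟨a, b, c⟩ := hq; linarith
      · obtain ⟨a, b, c⟩ := hq; linarith
    calc |(Φ^[m+1] u) (rT p) - (Φ^[m+1] v) (rT p)|
        ≤ (‖u - v‖ * M ^ (m+1)) * (2 * (rT p).1 - (rT p).2) ^ (m+1) / (m+1).factorial := h1
      _ ≤ (‖u - v‖ * M ^ (m+1)) * 2 ^ (m+1) / (m+1).factorial := by
          apply div_le_div_of_nonneg_right ?_ (by positivity) |>.trans_eq rfl
          exact mul_le_mul_of_nonneg_left hle (by positivity)
      _ = ((2 * M) ^ (m+1) / (m+1).factorial) * dist u v := by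
          rw [dist_eq_norm, mul_pow]; ring
  -- contraction for a large iterate
  obtain ⟨n₀, hn₀1, hn₀⟩ : ∃ n : ℕ, 1 ≤ n ∧ (2 * M) ^ n / n.factorial < 1 := by
    have ht := FloorSemiring.tendsto_pow_div_factorial_atTop (K := ℝ) (2 * M)
    have h1 := ht.eventually_lt_const (by norm_num : (0:ℝ) < 1)
    obtain ⟨n, hn, hn'⟩ := (h1.and (Filter.eventually_ge_atTop 1)).exists
    exact ⟨n, hn', hn⟩
  have hK0 : (0:ℝ) ≤ (2 * M) ^ n₀ / n₀.factorial := by positivity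
  have hcontr : ContractingWith (Real.toNNReal ((2 * M) ^ n₀ / n₀.factorial)) (Φ^[n₀]) := by
    constructor
    · have : ((Real.toNNReal ((2 * M) ^ n₀ / n₀.factorial)) : ℝ) < 1 := by
        rw [Real.coe_toNNReal _ hK0]; exact hn₀
      exact_mod_cast this
    · apply LipschitzWith.of_dist_le_mul
      intro u v
      rw [Real.coe_toNNReal _ hK0]
      exact dist_iter n₀ hn₀1 u v
  set k₀ : BoundedContinuousFunction (ℝ × ℝ) ℝ :=
    ContractingWith.fixedPoint (Φ^[n₀]) hcontr with hk₀def
  have hfix0 : Function.IsFixedPt (Φ^[n₀]) k₀ := hcontr.fixedPoint_isFixedPt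
  have hfixΦ : Φ k₀ = k₀ := by
    have h1 : Function.IsFixedPt (Φ^[n₀]) (Φ k₀) := by
      show Φ^[n₀] (Φ k₀) = Φ k₀
      rw [← Function.iterate_succ_apply Φ n₀ k₀, Function.iterate_succ_apply' Φ n₀ k₀, hfix0]
    have h2 := hcontr.fixedPoint_unique h1
    rw [h2, ← hk₀def]
  have huniq : ∀ u : BoundedContinuousFunction (ℝ × ℝ) ℝ, Φ u = u → u = k₀ := by
    intro u hu
    have : Function.IsFixedPt Φ u := hu
    exact hcontr.fixedPoint_unique (this.iterate n₀)
  have hk₀ : ∀ q ∈ Tri, (⇑k₀ : ℝ × ℝ → ℝ) q = Psi F G (⇑k₀) q := by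
    intro q hq
    conv_lhs => rw [← hfixΦ]
    exact hΦTri k₀ q hq
    -- the solution kernel
  set kf : ℝ → ℝ → ℝ := fun x y =>
    if 0 ≤ y then k₀ (x, y) else k₀ (x - y, 0) + y * Bfun F (⇑k₀) (x - y) 0 with hkf
  have hkfTri : ∀ q : ℝ × ℝ, q ∈ Tri → kf q.1 q.2 = k₀ q := by
    intro q hq
    simp only [hkf, if_pos hq.1]
  refine ⟨kf, ⟨?_, ?_, ?_⟩, ?_⟩
  · -- continuity on the triangle
    apply ContinuousOn.congr (k₀.continuous.continuousOn (s := Tri))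
    intro p hp
    exact hkfTri p hp
  · -- the characteristic derivative
    intro x y hy0 hyx hx1
    have hxy : ((x, y) : ℝ × ℝ) ∈ Tri := ⟨hy0, hyx.le, hx1.le⟩
    have hc0 : 0 < x - y := by linarith
    have hc1 : x - y ≤ 1 := by linarith
    have hcmem : ((x - y, 0) : ℝ × ℝ) ∈ Tri :=
      ⟨le_refl 0, by show (0:ℝ) ≤ x - y; linarith, by show x - y ≤ 1; linarith⟩
    set Bt : ℝ → ℝ := fun t => Bfun F (⇑k₀) (x - y) (max t 0) with hBt
    have hBtc : Continuous Bt :=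
      (Bfun_continuous_t hFc k₀.continuous (x - y)).comp (continuous_id.max continuous_const)
    have hInt : HasDerivAt (fun z => ∫ t in (0:ℝ)..z, Bt t) (Bt y) y :=
      intervalIntegral.integral_hasDerivAt_right (hBtc.intervalIntegrable _ _)
        (hBtc.stronglyMeasurableAtFilter _ _) hBtc.continuousAt
    have hcomp : HasDerivAt (fun s => ∫ t in (0:ℝ)..(y + s), Bt t) (Bt y) 0 := by
      have hy' : HasDerivAt (fun s : ℝ => y + s) 1 0 := (hasDerivAt_id (0:ℝ)).const_add y
      have hInt' : HasDerivAt (fun z => ∫ t in (0:ℝ)..z, Bt t) (Bt y) ((fun s : ℝ => y + s) 0) := by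
        simpa using hInt
      have h := hInt'.comp 0 hy'
      simpa [Function.comp_def] using h
    have hder0 : HasDerivAt (fun s => k₀ (x - y, 0) + ∫ t in (0:ℝ)..(y + s), Bt t) (Bt y) 0 :=
      hcomp.const_add _
    have hev : (fun s => kf (x + s) (y + s))
        =ᶠ[nhds 0] (fun s => k₀ (x - y, 0) + ∫ t in (0:ℝ)..(y + s), Bt t) := by
      have hmem : Ioo (-(x - y)) (1 - x) ∈ nhds (0:ℝ) :=
        Ioo_mem_nhds (by linarith) (by linarith)
      filter_upwards [hmem] with s hs
      obtain ⟨hs1, hs2⟩ := hs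
      have ecc : (x + s) - (y + s) = x - y := by ring
      rcases le_or_gt 0 (y + s) with hys | hys
      · have hTri : ((x + s, y + s) : ℝ × ℝ) ∈ Tri :=
          ⟨hys, by show y + s ≤ x + s; linarith, by show x + s ≤ 1; linarith⟩
        have e0 : kf (x + s) (y + s) = k₀ (x + s, y + s) := by
          simp only [hkf, if_pos hys]
        rw [e0, hk₀ _ hTri, Psi_char, ecc, ← hk₀ _ hcmem]
        congr 1
        apply intervalIntegral.integral_congr
        intro t ht
        rw [uIcc_of_le hys] at ht
        simp only [hBt, max_eq_left ht.1]
      · have e0 : kf (x + s) (y + s)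
            = k₀ ((x + s) - (y + s), 0) + (y + s) * Bfun F (⇑k₀) ((x + s) - (y + s)) 0 := by
          simp only [hkf, if_neg (not_le.mpr hys)]
        rw [e0, ecc]
        congr 1
        have hcg : ∀ t ∈ uIcc (0:ℝ) (y + s), Bt t = Bfun F (⇑k₀) (x - y) 0 := by
          intro t ht
          rw [uIcc_of_ge hys.le] at ht
          simp only [hBt, max_eq_right ht.2]
        rw [intervalIntegral.integral_congr hcg]
        simp [smul_eq_mul]
        try ring
    have final : HasDerivAt (fun s => kf (x + s) (y + s)) (Bt y) 0 :=
      hder0.congr_of_eventuallyEq hev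
    have hval : Bt y = (∫ ξ in y..x, kf x ξ * f ξ y) - f x y := by
      simp only [hBt, max_eq_left hy0]
      rw [Bfun_eq]
      have hcx : (x - y) + y = x := by ring
      rw [hcx]
      congr 1
      · apply intervalIntegral.integral_congr
        intro ξ hξ
        rw [uIcc_of_le hyx.le] at hξ
        have h1 : kf x ξ = k₀ (x, ξ) := by
          simp only [hkf, if_pos (hy0.trans hξ.1)]
        have h2 : F ξ y = f ξ y := by simpa using hFeq (ξ, y) ⟨hy0, hξ.1, hξ.2.trans hx1.le⟩
        beta_reduce
        rw [h1, h2]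
      · simpa using hFeq (x, y) hxy
    rw [← hval]
    exact final
  · -- the boundary condition
    intro x hx
    have hmem : ((x, 0) : ℝ × ℝ) ∈ Tri := ⟨le_refl 0, hx.1, hx.2⟩
    have h1 : kf x 0 = k₀ (x, 0) := hkfTri (x, 0) hmem
    have h2 := hk₀ _ hmem
    have h3 : Psi F G (⇑k₀) (x, 0) = -G x + ∫ η in (0:ℝ)..x, k₀ (x, η) * G η := by
      simp [Psi]
    have h4 : (∫ η in (0:ℝ)..x, k₀ (x, η) * G η) = ∫ η in (0:ℝ)..x, kf x η * g η := by
      apply intervalIntegral.integral_congr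
      intro η hη
      rw [uIcc_of_le hx.1] at hη
      have hη1 : 0 ≤ η := hη.1
      have h5 : kf x η = k₀ (x, η) := by simp only [hkf, if_pos hη1]
      have h6 : G η = g η := hGeq η ⟨hη1, hη.2.trans hx.2⟩
      beta_reduce
      rw [h5, h6]
    rw [h1, h2, h3, h4, hGeq x hx]
    ring
  · -- uniqueness
    rintro k' ⟨hk'c, hk'd, hk'b⟩ x y hxy
    obtain ⟨Mk, hMk⟩ := Tri_isCompact.exists_bound_of_continuousOn hk'c
    have hu'c : Continuous fun p : ℝ × ℝ => k' (rT p).1 (rT p).2 := by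
      have h := hk'c.comp_continuous rT_continuous rT_mem
      simpa [Function.comp_def] using h
    set u' : BoundedContinuousFunction (ℝ × ℝ) ℝ :=
      BoundedContinuousFunction.ofNormedAddCommGroup _ hu'c Mk
        (fun p => hMk _ (rT_mem p)) with hu'def
    have hu'eq : ∀ p, (⇑u') p = k' (rT p).1 (rT p).2 := fun p => rfl
    have hu'Tri : ∀ q : ℝ × ℝ, q ∈ Tri → (⇑u') q = k' q.1 q.2 := by
      intro q hq; rw [hu'eq, rT_eq hq]
    -- the candidate satisfies the integral equation strictly below the diagonal
    have keyD : ∀ q : ℝ × ℝ, q ∈ Tri → q.2 < q.1 → Psi F G (⇑u') q = k' q.1 q.2 := by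
      rintro ⟨x', y'⟩ ⟨ha, hb, hc⟩ hlt
      dsimp only at ha hb hc hlt ⊢
      have hc'0 : 0 < x' - y' := by linarith
      have hc'1 : x' - y' ≤ 1 := by linarith
      have hb1 : Psi F G (⇑u') (x' - y', 0) = k' (x' - y') 0 := by
        have hbc := hk'b (x' - y') ⟨by linarith, by linarith⟩
        have h3 : Psi F G (⇑u') (x' - y', 0)
            = -G (x' - y') + ∫ η in (0:ℝ)..(x' - y'), u' (x' - y', η) * G η := by
          simp [Psi]
        have h4 : (∫ η in (0:ℝ)..(x' - y'), u' (x' - y', η) * G η)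
            = ∫ η in (0:ℝ)..(x' - y'), k' (x' - y') η * g η := by
          apply intervalIntegral.integral_congr
          intro η hη
          rw [uIcc_of_le hc'0.le] at hη
          have e1 : (⇑u') (x' - y', η) = k' (x' - y') η := by
            simpa using hu'Tri (x' - y', η) ⟨hη.1, hη.2, hc'1⟩
          have e2 : G η = g η := hGeq η ⟨hη.1, hη.2.trans hc'1⟩
          beta_reduce
          rw [e1, e2]
        rw [h3, h4, hGeq (x' - y') ⟨hc'0.le, hc'1⟩, hbc]
        ring
      have hftc : (∫ t in (0:ℝ)..y', Bfun F (⇑u') (x' - y') t)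
          = k' x' y' - k' (x' - y') 0 := by
        have hcont : ContinuousOn (fun t => k' ((x' - y') + t) t) (Icc 0 y') := by
          have hmap : MapsTo (fun t : ℝ => (((x' - y') + t, t) : ℝ × ℝ)) (Icc 0 y') Tri := by
            intro t ht
            exact ⟨ht.1, by show t ≤ (x' - y') + t; linarith,
              by show (x' - y') + t ≤ 1; rcases ht with ⟨e1, e2⟩; linarith⟩
          have h := hk'c.comp ((by fun_prop :
            Continuous fun t : ℝ => (((x' - y') + t, t) : ℝ × ℝ)).continuousOn) hmap
          simpa [Function.comp_def] using h
        have hderiv : ∀ t ∈ Ioo (0:ℝ) y', HasDerivWithinAt (fun t => k' ((x' - y') + t) t)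
            (Bfun F (⇑u') (x' - y') t) (Ioi t) t := by
          intro t ht
          have hxt1 : (x' - y') + t < 1 := by rcases ht with ⟨e1, e2⟩; linarith
          have hD := hk'd ((x' - y') + t) t ht.1.le (by linarith) hxt1
          have hsub : HasDerivAt (fun r : ℝ => r - t) 1 t := by
            simpa using (hasDerivAt_id t).sub_const t
          have hcomp' := HasDerivAt.comp_of_eq (h := fun r : ℝ => r - t) (x := t)
            hD hsub (show (0:ℝ) = t - t by ring)
          have hfun : ((fun s => k' ((x' - y') + t + s) (t + s)) ∘ (fun r : ℝ => r - t))
              = fun r => k' ((x' - y') + r) r := by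
            funext r
            simp only [Function.comp]
            rw [show (x' - y') + t + (r - t) = (x' - y') + r from by ring,
              show t + (r - t) = r from by ring]
          have hVal : (∫ ξ in t..((x' - y') + t), k' ((x' - y') + t) ξ * f ξ t)
              - f ((x' - y') + t) t = Bfun F (⇑u') (x' - y') t := by
            rw [Bfun_eq]
            congr 1
            · apply intervalIntegral.integral_congr
              intro ξ hξ
              rw [uIcc_of_le (by linarith : t ≤ (x' - y') + t)] at hξ
              have e1 : (⇑u') ((x' - y') + t, ξ) = k' ((x' - y') + t) ξ := by
                simpa using hu'Tri ((x' - y') + t, ξ) ⟨ht.1.le.trans hξ.1, hξ.2, hxt1.le⟩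
              have e2 : F ξ t = f ξ t := by
                simpa using hFeq (ξ, t) ⟨ht.1.le, hξ.1, hξ.2.trans hxt1.le⟩
              beta_reduce
              rw [e1, e2]
            · have e3 : F ((x' - y') + t) t = f ((x' - y') + t) t := by
                simpa using hFeq ((x' - y') + t, t)
                  ⟨ht.1.le, by show t ≤ (x' - y') + t; linarith, hxt1.le⟩
              rw [e3]
          have : HasDerivAt (fun r => k' ((x' - y') + r) r) (Bfun F (⇑u') (x' - y') t) t := by
            rw [← hfun, ← hVal]
            simpa using hcomp'
          exact this.hasDerivWithinAt
        have hint : IntervalIntegrable (fun t => Bfun F (⇑u') (x' - y') t) volume 0 y' :=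
          (Bfun_continuous_t hFc u'.continuous _).intervalIntegrable _ _
        have h := intervalIntegral.integral_eq_sub_of_hasDeriv_right_of_le ha hcont hderiv hint
        rw [h]
        rw [show (x' - y') + y' = x' from by ring, show (x' - y') + 0 = x' - y' from by ring]
      rw [Psi_char, hb1, hftc]
      ring
    -- density of the strict region in the triangle
    have hDense : Dense {q : ↥Tri | (q : ℝ × ℝ).2 < (q : ℝ × ℝ).1} := by
      intro q
      rw [mem_closure_iff_seq_limit]
      obtain ⟨⟨xq, yq⟩, hq⟩ := q
      obtain ⟨hq0, hq1, hq2⟩ := hq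
      dsimp only at hq0 hq1 hq2
      have hseq : ∀ n : ℕ, (0:ℝ) < 1 / (n + 1) ∧ (1:ℝ) / (n + 1) ≤ 1 := by
        intro n
        constructor
        · positivity
        · rw [div_le_one (by positivity)]
          have : (0:ℝ) ≤ (n:ℝ) := Nat.cast_nonneg n
          linarith
      have hmemn : ∀ n : ℕ,
          ((xq + (1 / (n + 1 : ℝ)) * (1 - xq), (1 - 1 / (n + 1 : ℝ)) * yq) : ℝ × ℝ) ∈ Tri := by
        intro n
        obtain ⟨ht0, ht1⟩ := hseq n
        refine ⟨?_, ?_, ?_⟩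
        · show (0:ℝ) ≤ (1 - 1 / (n + 1 : ℝ)) * yq
          apply mul_nonneg (by linarith) hq0
        · show (1 - 1 / (n + 1 : ℝ)) * yq ≤ xq + (1 / (n + 1 : ℝ)) * (1 - xq)
          nlinarith
        · show xq + (1 / (n + 1 : ℝ)) * (1 - xq) ≤ 1
          nlinarith
      refine ⟨fun n => ⟨_, hmemn n⟩, fun n => ?_, ?_⟩
      · show ((1 - 1 / (n + 1 : ℝ)) * yq) < xq + (1 / (n + 1 : ℝ)) * (1 - xq)
        obtain ⟨ht0, ht1⟩ := hseq n
        nlinarith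
      · rw [tendsto_subtype_rng]
        dsimp only
        have hx : Filter.Tendsto (fun n : ℕ => xq + (1 / (n + 1 : ℝ)) * (1 - xq))
            Filter.atTop (nhds xq) := by
          have h := (tendsto_one_div_add_atTop_nhds_zero_nat.mul_const (1 - xq)).const_add xq
          simpa using h
        have hy : Filter.Tendsto (fun n : ℕ => (1 - 1 / (n + 1 : ℝ)) * yq)
            Filter.atTop (nhds yq) := by
          have h := ((tendsto_const_nhds :
              Filter.Tendsto (fun _ : ℕ => (1:ℝ)) Filter.atTop (nhds 1)).sub
              tendsto_one_div_add_atTop_nhds_zero_nat).mul_const yq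
          simpa using h
        exact hx.prodMk_nhds hy
    -- extend the identity to the whole triangle by continuity
    have hcontPsi : Continuous fun q : ↥Tri => Psi F G (⇑u') (q : ℝ × ℝ) :=
      (Psi_continuous hFc hGc u'.continuous).comp continuous_subtype_val
    have hcontk' : Continuous fun q : ↥Tri => k' (q : ℝ × ℝ).1 (q : ℝ × ℝ).2 :=
      hk'c.restrict
    have hext := Continuous.ext_on hDense hcontPsi hcontk'
      (fun q hq => keyD (q : ℝ × ℝ) q.2 hq)
    have key : ∀ q : ℝ × ℝ, q ∈ Tri → Psi F G (⇑u') q = k' q.1 q.2 := by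
      intro q hq
      exact congrFun hext ⟨q, hq⟩
    -- hence u' is a fixed point of the operator
    have hfix' : Φ u' = u' := by
      ext p
      rw [hΦ, key (rT p) (rT_mem p)]
      exact (hu'eq p).symm
    have hu'k₀ := huniq u' hfix'
    have h1 : (⇑u') (x, y) = k' x y := by simpa using hu'Tri (x, y) hxy
    have h2 : kf x y = (⇑k₀) (x, y) := by simpa using hkfTri (x, y) hxy
    rw [← h1, hu'k₀, h2]
end

section
/- Let T = {(x,y) ∈ ℝ² : 0 ≤ y ≤ x ≤ 1}, let f : T → ℝ and g : [0,1] → ℝ be continuous, and let k : T → ℝ be continuously differentiable with k_x(x,y) + k_y(x,y) = ∫_y^x k(x,ξ) f(ξ,y) dξ − f(x,y) on T and k(x,0) = ∫₀ˣ k(x,y) g(y) dy − g(x) for all x ∈ [0,1]. Suppose u : [0,∞) × [0,1] → ℝ is continuously differentiable and satisfies u_t(t,x) = u_x(t,x) + g(x) u(t,0) + ∫₀ˣ f(x,ξ) u(t,ξ) dξ for all t ≥ 0 and x ∈ [0,1], with the feedback boundary condition u(t,1) = ∫₀¹ k(1,y) u(t,y) dy. Then w(t,x) := u(t,x) − ∫₀ˣ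 k(x,ξ) u(t,ξ) dξ satisfies w_t(t,x) = w_x(t,x) for all t ≥ 0, x ∈ [0,1], and w(t,1) = 0 for all t ≥ 0; consequently w(t,x) = 0 for all t + x ≥ 1, so the closed-loop plant state converges to zero in finite time. -/
open Set

open Set MeasureTheory intervalIntegral Filter Topology

namespace BSaux

/-- projection onto `Icc 0 1` -/
noncomputable def pI (x : ℝ) : ℝ := max 0 (min x 1)

lemma pI_mem (x : ℝ) : pI x ∈ Icc (0:ℝ) 1 :=
  ⟨le_max_left _ _, max_le (by norm_num) (min_le_right _ _)⟩

lemma pI_eq {x : ℝ} (h : x ∈ Icc (0:ℝ) 1) : pI x = x := by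
  simp [pI, min_eq_left h.2, max_eq_right h.1]

lemma continuous_pI : Continuous pI :=
  continuous_const.max (continuous_id.min continuous_const)

/-- projection onto `Ici 0` -/
noncomputable def pt (x : ℝ) : ℝ := max 0 x

lemma pt_mem (x : ℝ) : pt x ∈ Ici (0:ℝ) := mem_Ici.mpr (le_max_left _ _)

lemma pt_eq {x : ℝ} (h : x ∈ Ici (0:ℝ)) : pt x = x := max_eq_right h

lemma continuous_pt : Continuous pt := continuous_const.max continuous_id

/-- projection onto `Tri` -/
noncomputable def pT (p : ℝ × ℝ) : ℝ × ℝ := (pI p.1, max 0 (min p.2 (pI p.1)))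

lemma pT_mem (p : ℝ × ℝ) : pT p ∈ Tri := by
  refine ⟨le_max_left _ _, max_le (pI_mem p.1).1 (min_le_right _ _), (pI_mem p.1).2⟩

lemma pT_eq {p : ℝ × ℝ} (h : p ∈ Tri) : pT p = p := by
  obtain ⟨h1, h2, h3⟩ := h
  have hx : pI p.1 = p.1 := pI_eq ⟨h1.trans h2, h3⟩
  simp [pT, hx, min_eq_left h2, max_eq_right h1]

lemma continuous_pT : Continuous pT :=
  (continuous_pI.comp continuous_fst).prodMk
    (continuous_const.max (continuous_snd.min (continuous_pI.comp continuous_fst)))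

/-- extension of a function on `Tri` to the whole plane -/
noncomputable def ext2 (F : ℝ → ℝ → ℝ) : ℝ → ℝ → ℝ := fun a b => F (pT (a,b)).1 (pT (a,b)).2

lemma ext2_eq (F : ℝ → ℝ → ℝ) {a b : ℝ} (h : (a,b) ∈ Tri) : ext2 F a b = F a b := by
  simp [ext2, pT_eq h]

lemma ext2_cont {F : ℝ → ℝ → ℝ} (hF : ContinuousOn (fun p : ℝ × ℝ => F p.1 p.2) Tri) :
    Continuous fun p : ℝ × ℝ => ext2 F p.1 p.2 :=
  hF.comp_continuous continuous_pT pT_mem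

/-- extension of a function on `Ici 0 ×ˢ Icc 0 1` -/
noncomputable def extO (F : ℝ → ℝ → ℝ) : ℝ → ℝ → ℝ := fun a b => F (pt a) (pI b)

lemma extO_eq (F : ℝ → ℝ → ℝ) {a b : ℝ} (ha : a ∈ Ici (0:ℝ)) (hb : b ∈ Icc (0:ℝ) 1) :
    extO F a b = F a b := by simp [extO, pt_eq ha, pI_eq hb]

lemma extO_cont {F : ℝ → ℝ → ℝ}
    (hF : ContinuousOn (fun p : ℝ × ℝ => F p.1 p.2) (Ici 0 ×ˢ Icc 0 1)) :
    Continuous fun p : ℝ × ℝ => extO F p.1 p.2 :=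
  hF.comp_continuous ((continuous_pt.comp continuous_fst).prodMk
    (continuous_pI.comp continuous_snd)) (fun p => ⟨pt_mem p.1, pI_mem p.2⟩)

noncomputable def extI (g : ℝ → ℝ) : ℝ → ℝ := fun a => g (pI a)

lemma extI_eq (g : ℝ → ℝ) {a : ℝ} (h : a ∈ Icc (0:ℝ) 1) : extI g a = g a := by
  simp [extI, pI_eq h]

lemma extI_cont {g : ℝ → ℝ} (hg : ContinuousOn g (Icc 0 1)) : Continuous (extI g) :=
  hg.comp_continuous continuous_pI pI_mem

/-- congruence of interval integrals from equality on the open interval -/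
lemma integral_congr_Ioo {f g : ℝ → ℝ} {a b : ℝ} (hab : a ≤ b)
    (h : ∀ x ∈ Ioo a b, f x = g x) :
    ∫ x in a..b, f x = ∫ x in a..b, g x := by
  rw [intervalIntegral.integral_of_le hab, intervalIntegral.integral_of_le hab,
    MeasureTheory.integral_Ioc_eq_integral_Ioo, MeasureTheory.integral_Ioc_eq_integral_Ioo]
  exact setIntegral_congr_fun measurableSet_Ioo h

/-- FTC for right-continuous derivatives, `HasDerivAt` on the interior. -/
lemma my_ftc {φ ψ : ℝ → ℝ} {a b : ℝ} (hab : a ≤ b)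
    (hφ : ContinuousOn φ (Icc a b))
    (hder : ∀ x ∈ Ioo a b, HasDerivAt φ (ψ x) x)
    (hψ : IntervalIntegrable ψ volume a b) :
    ∫ x in a..b, ψ x = φ b - φ a :=
  intervalIntegral.integral_eq_sub_of_hasDeriv_right_of_le hab hφ
    (fun x hx => (hder x hx).hasDerivWithinAt) hψ





lemma intervalIntegrable_of_bdd {f : ℝ → ℝ} {C a b : ℝ} (hm : Measurable f)
    (hC : ∀ x ∈ uIcc a b, |f x| ≤ C) : IntervalIntegrable f volume a b := by
  constructor
  · apply Measure.integrableOn_of_bounded (M := C) (by simp) hm.aestronglyMeasurable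
    filter_upwards [ae_restrict_mem measurableSet_Ioc] with x hx
    exact hC x (Icc_subset_uIcc (Ioc_subset_Icc_self hx))
  · apply Measure.integrableOn_of_bounded (M := C) (by simp) hm.aestronglyMeasurable
    filter_upwards [ae_restrict_mem measurableSet_Ioc] with x hx
    exact hC x (Icc_subset_uIcc' (Ioc_subset_Icc_self hx))

/-- Fubini on a rectangle, for a measurable uncurried integrand which is bounded
on the (closed) rectangle. -/
lemma rect_swap {Φ : ℝ → ℝ → ℝ} {a b c d : ℝ} (hab : a ≤ b) (hcd : c ≤ d)
    (hm : Measurable fun p : ℝ × ℝ => Φ p.1 p.2)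
    {C : ℝ} (hC : ∀ p ∈ Icc a b ×ˢ Icc c d, |Φ (p:ℝ×ℝ).1 p.2| ≤ C) :
    ∫ x in a..b, (∫ y in c..d, Φ x y) = ∫ y in c..d, (∫ x in a..b, Φ x y) := by
  have hint : Integrable (Function.uncurry Φ)
      ((volume.restrict (Ioc a b)).prod (volume.restrict (Ioc c d))) := by
    rw [Measure.prod_restrict]
    apply Measure.integrableOn_of_bounded (M := C)
    · rw [Measure.prod_prod]
      exact ENNReal.mul_ne_top (by simp) (by simp)
    · exact hm.aestronglyMeasurable
    · filter_upwards [ae_restrict_mem ((measurableSet_Ioc).prod measurableSet_Ioc)] with p hp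
      exact hC p ⟨Ioc_subset_Icc_self hp.1, Ioc_subset_Icc_self hp.2⟩
  have := MeasureTheory.integral_integral_swap (f := Φ)
      (μ := volume.restrict (Ioc a b)) (ν := volume.restrict (Ioc c d)) hint
  rw [intervalIntegral.integral_of_le hab, intervalIntegral.integral_of_le hcd]
  rw [show (fun x => ∫ y in c..d, Φ x y) = fun x => ∫ y in Ioc c d, Φ x y from
      funext fun x => intervalIntegral.integral_of_le hcd,
    show (fun y => ∫ x in a..b, Φ x y) = fun y => ∫ x in Ioc a b, Φ x y from
      funext fun y => intervalIntegral.integral_of_le hab]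
  exact this





/-- Fubini on the triangle `{0 ≤ ξ ≤ z ≤ x}` for a (globally) continuous integrand. -/
lemma tri_swap {Φ : ℝ → ℝ → ℝ} (hΦ : Continuous fun p : ℝ × ℝ => Φ p.1 p.2)
    {x : ℝ} (hx : 0 ≤ x) :
    ∫ z in (0:ℝ)..x, (∫ ξ in (0:ℝ)..z, Φ z ξ) = ∫ ξ in (0:ℝ)..x, (∫ z in ξ..x, Φ z ξ) := by
  set ψ : ℝ → ℝ → ℝ := fun z ξ => if ξ ≤ z then Φ z ξ else 0 with hψdef
  have hmψ : Measurable fun p : ℝ × ℝ => ψ p.1 p.2 :=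
    Measurable.ite (measurableSet_le measurable_snd measurable_fst)
      hΦ.measurable measurable_const
  obtain ⟨C, hC⟩ := (isCompact_Icc.prod isCompact_Icc).exists_bound_of_continuousOn
    (s := Icc (0:ℝ) x ×ˢ Icc (0:ℝ) x) hΦ.continuousOn
  have hCψ : ∀ p ∈ Icc (0:ℝ) x ×ˢ Icc (0:ℝ) x, |ψ (p : ℝ × ℝ).1 p.2| ≤ |C| := by
    intro p hp
    by_cases h : p.2 ≤ p.1
    · simpa [hψdef, h] using (hC p hp).trans (le_abs_self C)
    · simp [hψdef, h, abs_nonneg]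
  -- integrability of slices
  have hslice1 : ∀ z : ℝ, ∀ a b : ℝ, a ∈ Icc (0:ℝ) x → b ∈ Icc (0:ℝ) x → z ∈ Icc (0:ℝ) x →
      IntervalIntegrable (fun ξ => ψ z ξ) volume a b := by
    intro z a b ha hb hz
    apply intervalIntegrable_of_bdd (C := |C|)
      (hmψ.comp (measurable_const.prodMk measurable_id))
    intro ξ hξ
    have : ξ ∈ Icc (0:ℝ) x := by
      rcases mem_uIcc.mp hξ with h | h
      · exact ⟨ha.1.trans h.1, h.2.trans hb.2⟩
      · exact ⟨hb.1.trans h.1, h.2.trans ha.2⟩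
    exact hCψ (z, ξ) ⟨hz, this⟩
  have hslice2 : ∀ ξ : ℝ, ∀ a b : ℝ, a ∈ Icc (0:ℝ) x → b ∈ Icc (0:ℝ) x → ξ ∈ Icc (0:ℝ) x →
      IntervalIntegrable (fun z => ψ z ξ) volume a b := by
    intro ξ a b ha hb hξ
    apply intervalIntegrable_of_bdd (C := |C|)
      (hmψ.comp (measurable_id.prodMk measurable_const))
    intro z hz
    have : z ∈ Icc (0:ℝ) x := by
      rcases mem_uIcc.mp hz with h | h
      · exact ⟨ha.1.trans h.1, h.2.trans hb.2⟩
      · exact ⟨hb.1.trans h.1, h.2.trans ha.2⟩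
    exact hCψ (z, ξ) ⟨this, hξ⟩
  have hmem0x : (0:ℝ) ∈ Icc (0:ℝ) x := ⟨le_refl _, hx⟩
  have hmemxx : x ∈ Icc (0:ℝ) x := ⟨hx, le_refl _⟩
  -- left side
  have hL : ∫ z in (0:ℝ)..x, (∫ ξ in (0:ℝ)..z, Φ z ξ)
      = ∫ z in (0:ℝ)..x, (∫ ξ in (0:ℝ)..x, ψ z ξ) := by
    apply intervalIntegral.integral_congr
    intro z hz
    rw [uIcc_of_le hx] at hz
    have split : ∫ ξ in (0:ℝ)..x, ψ z ξ
        = (∫ ξ in (0:ℝ)..z, ψ z ξ) + ∫ ξ in z..x, ψ z ξ :=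
      (intervalIntegral.integral_add_adjacent_intervals
        (hslice1 z 0 z hmem0x hz hz) (hslice1 z z x hz hmemxx hz)).symm
    have h1 : ∫ ξ in (0:ℝ)..z, ψ z ξ = ∫ ξ in (0:ℝ)..z, Φ z ξ := by
      apply intervalIntegral.integral_congr
      intro ξ hξ
      rw [uIcc_of_le hz.1] at hξ
      simp [hψdef, hξ.2]
    have h2 : ∫ ξ in z..x, ψ z ξ = 0 := by
      rw [integral_congr_Ioo hz.2 (g := fun _ => 0)
        (fun ξ hξ => by simp [hψdef, not_le.mpr hξ.1])]
      simp
    simp [split, h1, h2]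
  -- right side
  have hR : ∫ ξ in (0:ℝ)..x, (∫ z in ξ..x, Φ z ξ)
      = ∫ ξ in (0:ℝ)..x, (∫ z in (0:ℝ)..x, ψ z ξ) := by
    apply intervalIntegral.integral_congr
    intro ξ hξ
    rw [uIcc_of_le hx] at hξ
    have split : ∫ z in (0:ℝ)..x, ψ z ξ
        = (∫ z in (0:ℝ)..ξ, ψ z ξ) + ∫ z in ξ..x, ψ z ξ :=
      (intervalIntegral.integral_add_adjacent_intervals
        (hslice2 ξ 0 ξ hmem0x hξ hξ) (hslice2 ξ ξ x hξ hmemxx hξ)).symm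
    have h1 : ∫ z in (0:ℝ)..ξ, ψ z ξ = 0 := by
      rw [integral_congr_Ioo hξ.1 (g := fun _ => 0)
        (fun z hz => by simp [hψdef, not_le.mpr hz.2])]
      simp
    have h2 : ∫ z in ξ..x, ψ z ξ = ∫ z in ξ..x, Φ z ξ := by
      apply intervalIntegral.integral_congr
      intro z hz
      rw [uIcc_of_le hξ.2] at hz
      simp [hψdef, hz.1]
    simp [split, h1, h2]
  rw [hL, hR]
  exact rect_swap hx hx hmψ hCψ



lemma hasDerivAt_primitive {f : ℝ → ℝ} (hf : Continuous f) (a b : ℝ) :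
    HasDerivAt (fun s => ∫ x in a..s, f x) (f b) b :=
  intervalIntegral.integral_hasDerivAt_right (hf.intervalIntegrable a b)
    (hf.stronglyMeasurableAtFilter _ _) hf.continuousAt

lemma convex_Tri : Convex ℝ Tri := by
  intro p hp q hq a b ha hb hab
  obtain ⟨hp1, hp2, hp3⟩ := hp
  obtain ⟨hq1, hq2, hq3⟩ := hq
  refine ⟨?_, ?_, ?_⟩ <;> simp only [Prod.smul_fst, Prod.smul_snd, Prod.fst_add,
    Prod.snd_add, smul_eq_mul] <;> nlinarith

lemma uniqueDiffOn_Tri : UniqueDiffOn ℝ Tri := by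
  apply uniqueDiffOn_convex convex_Tri
  refine ⟨((3:ℝ)/4, (1:ℝ)/4), ?_⟩
  have hopen : IsOpen {p : ℝ × ℝ | 0 < p.2 ∧ p.2 < p.1 ∧ p.1 < 1} := by
    refine IsOpen.and (isOpen_lt continuous_const continuous_snd) (IsOpen.and ?_ ?_)
    · exact isOpen_lt continuous_snd continuous_fst
    · exact isOpen_lt continuous_fst continuous_const
  have hsub : {p : ℝ × ℝ | 0 < p.2 ∧ p.2 < p.1 ∧ p.1 < 1} ⊆ Tri :=
    fun p hp => ⟨hp.1.le, hp.2.1.le, hp.2.2.le⟩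
  exact interior_maximal hsub hopen (by norm_num)

section kident

variable {k kx ky : ℝ → ℝ → ℝ}

/-- identification of `kx` with the `fderivWithin` in direction `(1,0)` -/
lemma kx_ident (hk_C1 : ContDiffOn ℝ 1 (fun p : ℝ × ℝ => k p.1 p.2) Tri)
    (hkx : ∀ x y : ℝ, (x, y) ∈ Tri →
      HasDerivWithinAt (fun z => k z y) (kx x y) (Icc y 1) x)
    {x y : ℝ} (h : (x, y) ∈ Tri) (hy1 : y < 1) :
    fderivWithin ℝ (fun p : ℝ × ℝ => k p.1 p.2) Tri (x, y) (1, 0) = kx x y := by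
  obtain ⟨h0, hyx, hx1⟩ := h
  have hKd : HasFDerivWithinAt (fun p : ℝ × ℝ => k p.1 p.2)
      (fderivWithin ℝ (fun p : ℝ × ℝ => k p.1 p.2) Tri (x, y)) Tri (x, y) :=
    ((hk_C1.differentiableOn one_ne_zero) (x, y) ⟨h0, hyx, hx1⟩).hasFDerivWithinAt
  have hline : HasDerivWithinAt (fun z : ℝ => ((z, y) : ℝ × ℝ)) ((1:ℝ), (0:ℝ)) (Icc y 1) x :=
    ((hasDerivAt_id x).prodMk (hasDerivAt_const x y)).hasDerivWithinAt
  have hmaps : MapsTo (fun z : ℝ => ((z, y) : ℝ × ℝ)) (Icc y 1) Tri :=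
    fun z hz => ⟨h0, hz.1, hz.2⟩
  have hcomp := hKd.comp_hasDerivWithinAt x hline hmaps
  have hu : UniqueDiffWithinAt ℝ (Icc y 1) x := (uniqueDiffOn_Icc hy1) x ⟨hyx, hx1⟩
  rw [← hcomp.derivWithin hu, ← (hkx x y ⟨h0, hyx, hx1⟩).derivWithin hu]; rfl

/-- identification of `ky` with the `fderivWithin` in direction `(0,1)` -/
lemma ky_ident (hk_C1 : ContDiffOn ℝ 1 (fun p : ℝ × ℝ => k p.1 p.2) Tri)
    (hky : ∀ x y : ℝ, (x, y) ∈ Tri →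
      HasDerivWithinAt (fun z => k x z) (ky x y) (Icc 0 x) y)
    {x y : ℝ} (h : (x, y) ∈ Tri) (hx0 : 0 < x) :
    fderivWithin ℝ (fun p : ℝ × ℝ => k p.1 p.2) Tri (x, y) (0, 1) = ky x y := by
  obtain ⟨h0, hyx, hx1⟩ := h
  have hKd : HasFDerivWithinAt (fun p : ℝ × ℝ => k p.1 p.2)
      (fderivWithin ℝ (fun p : ℝ × ℝ => k p.1 p.2) Tri (x, y)) Tri (x, y) :=
    ((hk_C1.differentiableOn one_ne_zero) (x, y) ⟨h0, hyx, hx1⟩).hasFDerivWithinAt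
  have hline : HasDerivWithinAt (fun z : ℝ => ((x, z) : ℝ × ℝ)) ((0:ℝ), (1:ℝ)) (Icc 0 x) y :=
    ((hasDerivAt_const y x).prodMk (hasDerivAt_id y)).hasDerivWithinAt
  have hmaps : MapsTo (fun z : ℝ => ((x, z) : ℝ × ℝ)) (Icc 0 x) Tri :=
    fun z hz => ⟨hz.1, hz.2, hx1⟩
  have hcomp := hKd.comp_hasDerivWithinAt y hline hmaps
  have hu : UniqueDiffWithinAt ℝ (Icc 0 x) y := (uniqueDiffOn_Icc hx0) y ⟨h0, hyx⟩
  rw [← hcomp.derivWithin hu, ← (hky x y ⟨h0, hyx, hx1⟩).derivWithin hu]; rfl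

end kident

end BSaux


open BSaux
set_option maxHeartbeats 1000000 in
/-- Finite-time stabilization of the first-order hyperbolic PIDE
`u_t = u_x + g(x) u(t,0) + ∫₀ˣ f(x,ξ) u(t,ξ) dξ` by the backstepping feedback
`u(t,1) = ∫₀¹ k(1,y) u(t,y) dy`: the transformed state
`w(t,x) = u(t,x) − ∫₀ˣ k(x,ξ) u(t,ξ) dξ` satisfies the delay line `w_t = w_x`,
`w(t,1) = 0`, hence vanishes for `t + x ≥ 1`. -/
theorem hyperbolic_backstepping_finite_time
    (f : ℝ → ℝ → ℝ) (hf : ContinuousOn (fun p : ℝ × ℝ => f p.1 p.2) Tri)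
    (g : ℝ → ℝ) (hg : ContinuousOn g (Icc 0 1))
    -- the kernel k, continuously differentiable on T, with partial derivatives kx, ky
    (k kx ky : ℝ → ℝ → ℝ)
    (hk_C1 : ContDiffOn ℝ 1 (fun p : ℝ × ℝ => k p.1 p.2) Tri)
    (hkx : ∀ x y : ℝ, (x, y) ∈ Tri →
      HasDerivWithinAt (fun z => k z y) (kx x y) (Icc y 1) x)
    (hky : ∀ x y : ℝ, (x, y) ∈ Tri →
      HasDerivWithinAt (fun z => k x z) (ky x y) (Icc 0 x) y)
    -- the kernel PDE
    (hk_pde : ∀ x y : ℝ, (x, y) ∈ Tri →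
      kx x y + ky x y = (∫ ξ in y..x, k x ξ * f ξ y) - f x y)
    -- the kernel boundary condition
    (hk_bc : ∀ x ∈ Icc (0:ℝ) 1, k x 0 = (∫ y in (0:ℝ)..x, k x y * g y) - g x)
    -- u is continuously differentiable on [0,∞) × [0,1], with partial derivatives ut, ux
    (u ut ux : ℝ → ℝ → ℝ)
    (hut : ∀ t ∈ Ici (0:ℝ), ∀ x ∈ Icc (0:ℝ) 1,
      HasDerivWithinAt (fun s => u s x) (ut t x) (Ici 0) t)
    (hux : ∀ t ∈ Ici (0:ℝ), ∀ x ∈ Icc (0:ℝ) 1,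
      HasDerivWithinAt (fun y => u t y) (ux t x) (Icc 0 1) x)
    (hut_cont : ContinuousOn (fun p : ℝ × ℝ => ut p.1 p.2) (Ici 0 ×ˢ Icc 0 1))
    (hux_cont : ContinuousOn (fun p : ℝ × ℝ => ux p.1 p.2) (Ici 0 ×ˢ Icc 0 1))
    -- the plant PIDE
    (hpde : ∀ t ∈ Ici (0:ℝ), ∀ x ∈ Icc (0:ℝ) 1,
      ut t x = ux t x + g x * u t 0 + ∫ ξ in (0:ℝ)..x, f x ξ * u t ξ)
    -- the backstepping boundary feedback
    (hfeedback : ∀ t ∈ Ici (0:ℝ), u t 1 = ∫ y in (0:ℝ)..1, k 1 y * u t y) :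
    let w : ℝ → ℝ → ℝ := fun t x => u t x - ∫ ξ in (0:ℝ)..x, k x ξ * u t ξ
    (∃ wder : ℝ → ℝ → ℝ,
      ∀ t ∈ Ici (0:ℝ), ∀ x ∈ Icc (0:ℝ) 1,
        HasDerivWithinAt (fun s => w s x) (wder t x) (Ici 0) t ∧
        HasDerivWithinAt (fun y => w t y) (wder t x) (Icc 0 1) x) ∧
    (∀ t ∈ Ici (0:ℝ), w t 1 = 0) ∧
    (∀ t ∈ Ici (0:ℝ), ∀ x ∈ Icc (0:ℝ) 1, 1 ≤ t + x → w t x = 0) := by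
  intro w
  -- extended (globally continuous) versions of all data
  set K : ℝ → ℝ → ℝ := ext2 k with hKdef
  set Fe : ℝ → ℝ → ℝ := ext2 f with hFedef
  set Ge : ℝ → ℝ := extI g with hGedef
  set Te : ℝ → ℝ → ℝ := extO ut with hTedef
  set Xe : ℝ → ℝ → ℝ := extO ux with hXedef
  set Kx : ℝ → ℝ → ℝ :=
    ext2 (fun a b => fderivWithin ℝ (fun q : ℝ × ℝ => k q.1 q.2) Tri (a, b) (1, 0)) with hKxdef
  set Ky : ℝ → ℝ → ℝ :=
    ext2 (fun a b => fderivWithin ℝ (fun q : ℝ × ℝ => k q.1 q.2) Tri (a, b) (0, 1)) with hKydef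
  set Ub : ℝ → ℝ → ℝ :=
    fun t x => u 0 0 + (∫ ξ in (0:ℝ)..x, Xe 0 ξ) + ∫ τ in (0:ℝ)..t, Te τ x with hUbdef
  set D : ℝ → ℝ → ℝ :=
    fun t x => Te t x - ∫ ξ in (0:ℝ)..x, K x ξ * Te t ξ with hDdef
  set W : ℝ → ℝ → ℝ :=
    fun t x => Ub t x - ∫ ξ in (0:ℝ)..x, K x ξ * Ub t ξ with hWdef
  -- continuity of all extended data
  have hKc : Continuous fun p : ℝ × ℝ => K p.1 p.2 := ext2_cont hk_C1.continuousOn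
  have hFc : Continuous fun p : ℝ × ℝ => Fe p.1 p.2 := ext2_cont hf
  have hGc : Continuous Ge := extI_cont hg
  have hTc : Continuous fun p : ℝ × ℝ => Te p.1 p.2 := extO_cont hut_cont
  have hXc : Continuous fun p : ℝ × ℝ => Xe p.1 p.2 := extO_cont hux_cont
  have hKxc : Continuous fun p : ℝ × ℝ => Kx p.1 p.2 := by
    apply ext2_cont
    have := (hk_C1.continuousOn_fderivWithin uniqueDiffOn_Tri le_rfl).clm_apply
      (continuousOn_const (c := ((1:ℝ), (0:ℝ))))
    exact this.congr fun p hp => by rw [Prod.mk.eta]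
  have hKyc : Continuous fun p : ℝ × ℝ => Ky p.1 p.2 := by
    apply ext2_cont
    have := (hk_C1.continuousOn_fderivWithin uniqueDiffOn_Tri le_rfl).clm_apply
      (continuousOn_const (c := ((0:ℝ), (1:ℝ))))
    exact this.congr fun p hp => by rw [Prod.mk.eta]
  -- identification of `Kx`, `Ky` with `kx`, `ky`
  have hKxeq : ∀ a b : ℝ, (a, b) ∈ Tri → b < 1 → Kx a b = kx a b := by
    intro a b h hb
    rw [hKxdef, ext2_eq _ h, kx_ident hk_C1 hkx h hb]
  have hKyeq : ∀ a b : ℝ, (a, b) ∈ Tri → 0 < a → Ky a b = ky a b := by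
    intro a b h ha
    rw [hKydef, ext2_eq _ h, ky_ident hk_C1 hky h ha]
  have hKeq : ∀ a b : ℝ, (a, b) ∈ Tri → K a b = k a b := fun a b h => by
    rw [hKdef]; exact ext2_eq k h
  have hFeq : ∀ a b : ℝ, (a, b) ∈ Tri → Fe a b = f a b := fun a b h => by
    rw [hFedef]; exact ext2_eq f h
  have hGeq : ∀ a ∈ Icc (0:ℝ) 1, Ge a = g a := fun a h => by
    rw [hGedef]; exact extI_eq g h
  have hXeq : ∀ a : ℝ, 0 ≤ a → ∀ b ∈ Icc (0:ℝ) 1, Xe a b = ux a b := fun a ha b hb => by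
    rw [hXedef]; exact extO_eq ux ha hb
  have hTeq : ∀ a : ℝ, 0 ≤ a → ∀ b ∈ Icc (0:ℝ) 1, Te a b = ut a b := fun a ha b hb => by
    rw [hTedef]; exact extO_eq ut ha hb
  -- `Ub` agrees with `u` on the domain
  have hu_eq : ∀ t ∈ Ici (0:ℝ), ∀ x ∈ Icc (0:ℝ) 1, Ub t x = u t x := by
    intro t ht x hx
    have h1 : ∫ ξ in (0:ℝ)..x, Xe 0 ξ = u 0 x - u 0 0 := by
      apply my_ftc (φ := fun y => u 0 y) hx.1
      · intro y hy
        exact ((hux 0 (mem_Ici.mpr le_rfl) y ⟨hy.1, hy.2.trans hx.2⟩).continuousWithinAt).mono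
          (Icc_subset_Icc le_rfl hx.2)
      · intro ξ hξ
        have hm : ξ ∈ Icc (0:ℝ) 1 := ⟨hξ.1.le, (hξ.2.trans_le hx.2).le⟩
        have h := (hux 0 (mem_Ici.mpr le_rfl) ξ hm).hasDerivAt
          (Icc_mem_nhds hξ.1 (hξ.2.trans_le hx.2))
        rw [hXedef]; rw [extO_eq ux (mem_Ici.mpr le_rfl) hm]; exact h
      · exact (hXc.comp (continuous_const.prodMk continuous_id)).intervalIntegrable _ _
    have h2 : ∫ τ in (0:ℝ)..t, Te τ x = u t x - u 0 x := by
      apply my_ftc (φ := fun s => u s x) ht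
      · intro τ hτ
        exact ((hut τ hτ.1 x hx).continuousWithinAt).mono Icc_subset_Ici_self
      · intro τ hτ
        have h := (hut τ hτ.1.le x hx).hasDerivAt (Ici_mem_nhds hτ.1)
        rw [hTedef]; rw [extO_eq ut hτ.1.le hx]; exact h
      · exact (hTc.comp (continuous_id.prodMk continuous_const)).intervalIntegrable _ _
    rw [hUbdef]
    simp only []
    rw [h1, h2]; ring
  -- joint continuity
  have hUbc : Continuous fun p : ℝ × ℝ => Ub p.1 p.2 := by
    have hA : Continuous fun y : ℝ => ∫ ξ in (0:ℝ)..y, Xe 0 ξ := by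
      apply intervalIntegral.continuous_parametric_intervalIntegral_of_continuous
        (f := fun (_ : ℝ) ξ => Xe 0 ξ) (s := fun y : ℝ => y)
      · exact hXc.comp (continuous_const.prodMk continuous_snd)
      · exact continuous_id
    have hB : Continuous fun p : ℝ × ℝ => ∫ τ in (0:ℝ)..p.1, Te τ p.2 := by
      apply intervalIntegral.continuous_parametric_intervalIntegral_of_continuous
        (f := fun (p : ℝ × ℝ) τ => Te τ p.2) (s := fun p : ℝ × ℝ => p.1)
      · exact hTc.comp (continuous_snd.prodMk ((continuous_snd.comp continuous_fst)))
      · exact continuous_fst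
    exact (continuous_const.add (hA.comp continuous_snd)).add hB
  have hInner : ∀ V : ℝ → ℝ → ℝ, (Continuous fun p : ℝ × ℝ => V p.1 p.2) →
      Continuous fun p : ℝ × ℝ => ∫ ξ in (0:ℝ)..p.2, K p.2 ξ * V p.1 ξ := by
    intro V hV
    apply intervalIntegral.continuous_parametric_intervalIntegral_of_continuous
      (f := fun (p : ℝ × ℝ) ξ => K p.2 ξ * V p.1 ξ) (s := fun p : ℝ × ℝ => p.2)
    · exact (hKc.comp (((continuous_snd.comp continuous_fst)).prodMk continuous_snd)).mul
        (hV.comp (((continuous_fst.comp continuous_fst)).prodMk continuous_snd))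
    · exact continuous_snd
  have hDc : Continuous fun p : ℝ × ℝ => D p.1 p.2 := hTc.sub (hInner Te hTc)
  have hWc : Continuous fun p : ℝ × ℝ => W p.1 p.2 := hUbc.sub (hInner Ub hUbc)
  -- `W` agrees with `w` on the domain
  have hw : ∀ (s y : ℝ), w s y = u s y - ∫ ξ in (0:ℝ)..y, k y ξ * u s ξ := fun _ _ => rfl
  have hW_eq : ∀ t ∈ Ici (0:ℝ), ∀ x ∈ Icc (0:ℝ) 1, W t x = w t x := by
    intro t ht x hx
    have hcongr : ∫ ξ in (0:ℝ)..x, K x ξ * Ub t ξ = ∫ ξ in (0:ℝ)..x, k x ξ * u t ξ := by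
      apply intervalIntegral.integral_congr
      intro ξ hξ
      rw [uIcc_of_le hx.1] at hξ
      show K x ξ * Ub t ξ = k x ξ * u t ξ
      rw [hKdef]
      rw [ext2_eq k ⟨hξ.1, hξ.2, hx.2⟩, hu_eq t (mem_Ici.mpr ht) ξ ⟨hξ.1, hξ.2.trans hx.2⟩]
    rw [hw, hWdef]
    simp only []
    rw [hcongr, hu_eq t ht x hx]
  -- time representation (valid for all x ∈ [0,1], all t ≥ 0)
  have hUbdiff : ∀ (s ξ : ℝ), Ub s ξ = Ub 0 ξ + ∫ τ in (0:ℝ)..s, Te τ ξ := by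
    intro s ξ
    rw [hUbdef]
    simp only [intervalIntegral.integral_same]
    ring
  have hWval : ∀ (s y : ℝ), W s y = Ub s y - ∫ ξ in (0:ℝ)..y, K y ξ * Ub s ξ := fun _ _ => rfl
  have hDval : ∀ (s y : ℝ), D s y = Te s y - ∫ ξ in (0:ℝ)..y, K y ξ * Te s ξ := fun _ _ => rfl
  clear_value K Fe Ge Te Xe Kx Ky Ub D W
  have hF1 : ∀ x ∈ Icc (0:ℝ) 1, ∀ t : ℝ, 0 ≤ t → W t x = W 0 x + ∫ τ in (0:ℝ)..t, D τ x := by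
    intro x hx t ht
    have hKslice : Continuous fun ξ => K x ξ := hKc.comp (continuous_const.prodMk continuous_id)
    have hint1 : IntervalIntegrable (fun ξ => K x ξ * Ub 0 ξ) volume 0 x :=
      (hKslice.mul (hUbc.comp (continuous_const.prodMk continuous_id))).intervalIntegrable _ _
    have hcont2 : Continuous fun ξ => ∫ τ in (0:ℝ)..t, Te τ ξ := by
      apply intervalIntegral.continuous_parametric_intervalIntegral_of_continuous
        (f := fun (ξ : ℝ) τ => Te τ ξ) (s := fun _ : ℝ => t)
      · exact hTc.comp (continuous_snd.prodMk continuous_fst)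
      · exact continuous_const
    have e1 : ∫ ξ in (0:ℝ)..x, K x ξ * Ub t ξ
        = (∫ ξ in (0:ℝ)..x, K x ξ * Ub 0 ξ)
          + ∫ ξ in (0:ℝ)..x, K x ξ * ∫ τ in (0:ℝ)..t, Te τ ξ := by
      rw [← intervalIntegral.integral_add (g := fun ξ => K x ξ * ∫ τ in (0:ℝ)..t, Te τ ξ) hint1 ((hKslice.mul hcont2).intervalIntegrable _ _)]
      apply intervalIntegral.integral_congr
      intro ξ _
      show K x ξ * Ub t ξ = _
      rw [hUbdiff t ξ]; ring
    have e2 : ∫ ξ in (0:ℝ)..x, K x ξ * ∫ τ in (0:ℝ)..t, Te τ ξ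
        = ∫ ξ in (0:ℝ)..x, ∫ τ in (0:ℝ)..t, K x ξ * Te τ ξ := by
      apply intervalIntegral.integral_congr
      intro ξ _
      exact (intervalIntegral.integral_const_mul _ _).symm
    have hΦc : Continuous fun p : ℝ × ℝ => K x p.1 * Te p.2 p.1 :=
      (hKc.comp (continuous_const.prodMk continuous_fst)).mul
        (hTc.comp (continuous_snd.prodMk continuous_fst))
    obtain ⟨C, hC⟩ := (isCompact_Icc.prod isCompact_Icc).exists_bound_of_continuousOn
      (s := Icc (0:ℝ) x ×ˢ Icc (0:ℝ) t) hΦc.continuousOn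
    have e3 : ∫ ξ in (0:ℝ)..x, ∫ τ in (0:ℝ)..t, K x ξ * Te τ ξ
        = ∫ τ in (0:ℝ)..t, ∫ ξ in (0:ℝ)..x, K x ξ * Te τ ξ :=
      rect_swap hx.1 ht hΦc.measurable (C := C) (fun p hp => by rw [← Real.norm_eq_abs]; exact hC p hp)
    have hTslice : Continuous fun τ => Te τ x := hTc.comp (continuous_id.prodMk continuous_const)
    have hInnerSlice : Continuous fun τ => ∫ ξ in (0:ℝ)..x, K x ξ * Te τ ξ := by
      apply intervalIntegral.continuous_parametric_intervalIntegral_of_continuous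
        (f := fun (τ : ℝ) ξ => K x ξ * Te τ ξ) (s := fun _ : ℝ => x)
      · exact (hKc.comp (continuous_const.prodMk continuous_snd)).mul
          (hTc.comp (continuous_fst.prodMk continuous_snd))
      · exact continuous_const
    have e4 : ∫ τ in (0:ℝ)..t, D τ x
        = (∫ τ in (0:ℝ)..t, Te τ x) - ∫ τ in (0:ℝ)..t, ∫ ξ in (0:ℝ)..x, K x ξ * Te τ ξ := by
      rw [← intervalIntegral.integral_sub (hTslice.intervalIntegrable _ _)
        (hInnerSlice.intervalIntegrable _ _)]
      exact intervalIntegral.integral_congr fun τ _ => hDval τ x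
    rw [hWval, hWval, e4, hUbdiff t x]
    linarith [e1, e2, e3]
  -- FTC for the kernel in its first variable
  have hKFTC : ∀ x ξ : ℝ, 0 ≤ ξ → ξ ≤ x → x ≤ 1 → K x ξ = K ξ ξ + ∫ z in ξ..x, Kx z ξ := by
    intro x ξ hξ0 hξx hx1
    have hφc : ContinuousOn (fun z => K z ξ) (Icc ξ x) :=
      (hKc.comp (continuous_id.prodMk continuous_const)).continuousOn
    have hder : ∀ z ∈ Ioo ξ x, HasDerivAt (fun z' => K z' ξ) (Kx z ξ) z := by
      intro z hz
      have hz1 : z < 1 := hz.2.trans_le hx1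
      have hmem : (z, ξ) ∈ Tri := ⟨hξ0, hz.1.le, hz1.le⟩
      have h := (hkx z ξ hmem).hasDerivAt (Icc_mem_nhds hz.1 hz1)
      have heq : (fun z' => K z' ξ) =ᶠ[nhds z] fun z' => k z' ξ :=
        Filter.eventuallyEq_of_mem (Ioo_mem_nhds hz.1 hz1)
          (fun z' hz' => by rw [hKdef]; exact ext2_eq k ⟨hξ0, hz'.1.le, hz'.2.le⟩)
      have hval : Kx z ξ = kx z ξ := hKxeq z ξ hmem (lt_of_le_of_lt (le_refl ξ) (hz.1.trans hz1))
      rw [hval]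
      exact h.congr_of_eventuallyEq heq
    have hres := my_ftc (φ := fun z => K z ξ) hξx hφc hder
      ((hKxc.comp (continuous_id.prodMk continuous_const)).intervalIntegrable _ _)
    linarith [hres]
  -- the key pointwise identity
  have hDX : ∀ t : ℝ, 0 ≤ t → ∀ z : ℝ, 0 ≤ z → z ≤ 1 →
      D t z = Xe t z - K z z * Ub t z - ∫ ξ in (0:ℝ)..z, Kx z ξ * Ub t ξ := by
    intro t ht z hz0 hz1
    have cK : Continuous fun ξ => K z ξ := hKc.comp (continuous_const.prodMk continuous_id)
    have cKy : Continuous fun ξ => Ky z ξ := hKyc.comp (continuous_const.prodMk continuous_id)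
    have cKx : Continuous fun ξ => Kx z ξ := hKxc.comp (continuous_const.prodMk continuous_id)
    have cUb : Continuous fun ξ => Ub t ξ := hUbc.comp (continuous_const.prodMk continuous_id)
    have cXe : Continuous fun ξ => Xe t ξ := hXc.comp (continuous_const.prodMk continuous_id)
    have cFeZ : Continuous fun ξ => Fe z ξ := hFc.comp (continuous_const.prodMk continuous_id)
    have cFint : Continuous fun ξ => ∫ s in (0:ℝ)..ξ, Fe ξ s * Ub t s := by
      apply intervalIntegral.continuous_parametric_intervalIntegral_of_continuous
        (f := fun (ξ : ℝ) s => Fe ξ s * Ub t s) (s := fun ξ : ℝ => ξ)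
      · exact (hFc.comp (continuous_fst.prodMk continuous_snd)).mul
          (hUbc.comp (continuous_const.prodMk continuous_snd))
      · exact continuous_id
    have cKFint : Continuous fun ξ => ∫ s in ξ..z, K z s * Fe s ξ := by
      have hcc : Continuous fun ξ => ∫ s in z..ξ, K z s * Fe s ξ := by
        apply intervalIntegral.continuous_parametric_intervalIntegral_of_continuous
          (f := fun (ξ : ℝ) s => K z s * Fe s ξ) (s := fun ξ : ℝ => ξ)
        · exact (hKc.comp (continuous_const.prodMk continuous_snd)).mul
            (hFc.comp (continuous_snd.prodMk continuous_fst))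
        · exact continuous_id
      have heq : (fun ξ => ∫ s in ξ..z, K z s * Fe s ξ)
          = fun ξ => -∫ s in z..ξ, K z s * Fe s ξ :=
        funext fun ξ => intervalIntegral.integral_symm _ _
      rw [heq]
      exact hcc.neg
    -- the transported plant PDE
    have hTe_pde : ∀ ξ : ℝ, 0 ≤ ξ → ξ ≤ 1 →
        Te t ξ = Xe t ξ + Ge ξ * Ub t 0 + ∫ s in (0:ℝ)..ξ, Fe ξ s * Ub t s := by
      intro ξ h0 h1
      have hm : ξ ∈ Icc (0:ℝ) 1 := ⟨h0, h1⟩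
      have hint : ∫ s in (0:ℝ)..ξ, Fe ξ s * Ub t s = ∫ s in (0:ℝ)..ξ, f ξ s * u t s := by
        apply intervalIntegral.integral_congr
        intro s hs
        rw [uIcc_of_le h0] at hs
        show Fe ξ s * Ub t s = f ξ s * u t s
        rw [hFeq ξ s ⟨hs.1, hs.2, h1⟩, hu_eq t (mem_Ici.mpr ht) s ⟨hs.1, hs.2.trans h1⟩]
      rw [hTeq t ht ξ hm, hXeq t ht ξ hm, hGeq ξ hm, hint,
        hu_eq t (mem_Ici.mpr ht) 0 ⟨le_rfl, zero_le_one⟩]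
      exact hpde t (mem_Ici.mpr ht) ξ hm
    -- integration by parts
    have hIBP : ∫ ξ in (0:ℝ)..z, (Ky z ξ * Ub t ξ + K z ξ * Xe t ξ)
        = K z z * Ub t z - K z 0 * Ub t 0 := by
      apply my_ftc (φ := fun ξ => K z ξ * Ub t ξ) hz0 (cK.mul cUb).continuousOn
      · intro ξ hξ
        have hξ1 : ξ < 1 := lt_of_lt_of_le hξ.2 hz1
        have hmemz : (z, ξ) ∈ Tri := ⟨hξ.1.le, hξ.2.le, hz1⟩
        have h1 : HasDerivAt (fun ξ' => K z ξ') (Ky z ξ) ξ := by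
          have h := (hky z ξ hmemz).hasDerivAt (Icc_mem_nhds hξ.1 hξ.2)
          have heqv : (fun ξ' => K z ξ') =ᶠ[nhds ξ] fun ξ' => k z ξ' :=
            Filter.eventuallyEq_of_mem (Ioo_mem_nhds hξ.1 hξ.2)
              (fun ξ' hξ' => hKeq z ξ' ⟨hξ'.1.le, hξ'.2.le, hz1⟩)
          rw [hKyeq z ξ hmemz (lt_of_lt_of_le hξ.1 hξ.2.le)]
          exact h.congr_of_eventuallyEq heqv
        have h2 : HasDerivAt (fun ξ' => Ub t ξ') (Xe t ξ) ξ := by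
          have hm : ξ ∈ Icc (0:ℝ) 1 := ⟨hξ.1.le, hξ1.le⟩
          have h := (hux t (mem_Ici.mpr ht) ξ hm).hasDerivAt (Icc_mem_nhds hξ.1 hξ1)
          have heqv : (fun ξ' => Ub t ξ') =ᶠ[nhds ξ] fun ξ' => u t ξ' :=
            Filter.eventuallyEq_of_mem (Ioo_mem_nhds hξ.1 hξ1)
              (fun ξ' hξ' => hu_eq t (mem_Ici.mpr ht) ξ' ⟨hξ'.1.le, hξ'.2.le⟩)
          rw [hXeq t ht ξ hm]
          exact h.congr_of_eventuallyEq heqv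
        exact h1.mul h2
      · exact ((cKy.mul cUb).add (cK.mul cXe)).intervalIntegrable _ _
    have hIBP2 : (∫ ξ in (0:ℝ)..z, Ky z ξ * Ub t ξ) + (∫ ξ in (0:ℝ)..z, K z ξ * Xe t ξ)
        = K z z * Ub t z - K z 0 * Ub t 0 := by
      rw [← intervalIntegral.integral_add (f := fun ξ => Ky z ξ * Ub t ξ) (g := fun ξ => K z ξ * Xe t ξ) ((cKy.mul cUb).intervalIntegrable _ _)
        ((cK.mul cXe).intervalIntegrable _ _)]
      exact hIBP
    -- kernel boundary condition transported
    have hbc : K z 0 = (∫ ξ in (0:ℝ)..z, K z ξ * Ge ξ) - Ge z := by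
      have hint : ∫ ξ in (0:ℝ)..z, K z ξ * Ge ξ = ∫ y in (0:ℝ)..z, k z y * g y := by
        apply intervalIntegral.integral_congr
        intro y hy
        rw [uIcc_of_le hz0] at hy
        show K z y * Ge y = k z y * g y
        rw [hKeq z y ⟨hy.1, hy.2, hz1⟩, hGeq y ⟨hy.1, hy.2.trans hz1⟩]
      rw [hKeq z 0 ⟨le_rfl, hz0, hz1⟩, hint, hGeq z ⟨hz0, hz1⟩]
      exact hk_bc z ⟨hz0, hz1⟩
    -- kernel PDE transported on the open interval
    have hker : ∀ ξ ∈ Ioo (0:ℝ) z,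
        Kx z ξ + Ky z ξ = (∫ s in ξ..z, K z s * Fe s ξ) - Fe z ξ := by
      intro ξ hξ
      have hmemz : (z, ξ) ∈ Tri := ⟨hξ.1.le, hξ.2.le, hz1⟩
      have hξ1 : ξ < 1 := lt_of_lt_of_le hξ.2 hz1
      have hint : ∫ s in ξ..z, K z s * Fe s ξ = ∫ s in ξ..z, k z s * f s ξ := by
        apply intervalIntegral.integral_congr
        intro s hs
        rw [uIcc_of_le hξ.2.le] at hs
        show K z s * Fe s ξ = k z s * f s ξ
        rw [hKeq z s ⟨hξ.1.le.trans hs.1, hs.2, hz1⟩, hFeq s ξ ⟨hξ.1.le, hs.1, hs.2.trans hz1⟩]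
      rw [hKxeq z ξ hmemz hξ1, hKyeq z ξ hmemz (lt_of_lt_of_le hξ.1 hξ.2.le), hint,
        hFeq z ξ hmemz]
      exact hk_pde z ξ hmemz
    -- split ∫ K·Te according to the plant PDE
    have hsplit : ∫ ξ in (0:ℝ)..z, K z ξ * Te t ξ
        = (∫ ξ in (0:ℝ)..z, K z ξ * Xe t ξ)
          + (∫ ξ in (0:ℝ)..z, K z ξ * Ge ξ) * Ub t 0
          + ∫ ξ in (0:ℝ)..z, K z ξ * ∫ s in (0:ℝ)..ξ, Fe ξ s * Ub t s := by
      rw [← intervalIntegral.integral_mul_const]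
      rw [← intervalIntegral.integral_add (f := fun ξ => K z ξ * Xe t ξ) (g := fun ξ => K z ξ * Ge ξ * Ub t 0) ((cK.mul cXe).intervalIntegrable _ _)
        (((cK.mul hGc).mul continuous_const).intervalIntegrable _ _)]
      rw [← intervalIntegral.integral_add
        (f := fun ξ => K z ξ * Xe t ξ + K z ξ * Ge ξ * Ub t 0)
        (g := fun ξ => K z ξ * ∫ s in (0:ℝ)..ξ, Fe ξ s * Ub t s)
        (((cK.mul cXe).add ((cK.mul hGc).mul continuous_const)).intervalIntegrable _ _)
        ((cK.mul cFint).intervalIntegrable _ _)]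
      apply intervalIntegral.integral_congr
      intro ξ hξ
      rw [uIcc_of_le hz0] at hξ
      show K z ξ * Te t ξ = _
      rw [hTe_pde ξ hξ.1 (hξ.2.trans hz1)]
      ring
    -- Fubini on the cascade term
    have hC3 : ∫ ξ in (0:ℝ)..z, K z ξ * ∫ s in (0:ℝ)..ξ, Fe ξ s * Ub t s
        = ∫ ξ in (0:ℝ)..z, (∫ s in ξ..z, K z s * Fe s ξ) * Ub t ξ := by
      have step1 : ∫ ξ in (0:ℝ)..z, K z ξ * ∫ s in (0:ℝ)..ξ, Fe ξ s * Ub t s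
          = ∫ ξ in (0:ℝ)..z, ∫ s in (0:ℝ)..ξ, K z ξ * Fe ξ s * Ub t s := by
        apply intervalIntegral.integral_congr
        intro ξ _
        show K z ξ * _ = _
        rw [← intervalIntegral.integral_const_mul]
        apply intervalIntegral.integral_congr
        intro s _
        show _ = _
        ring
      have hΦ : Continuous fun p : ℝ × ℝ => K z p.1 * Fe p.1 p.2 * Ub t p.2 :=
        ((hKc.comp (continuous_const.prodMk continuous_fst)).mul hFc).mul
          (hUbc.comp (continuous_const.prodMk continuous_snd))
      have step2 := tri_swap (Φ := fun a b => K z a * Fe a b * Ub t b) hΦ hz0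
      have step3 : ∫ ξ in (0:ℝ)..z, ∫ s in ξ..z, K z s * Fe s ξ * Ub t ξ
          = ∫ ξ in (0:ℝ)..z, (∫ s in ξ..z, K z s * Fe s ξ) * Ub t ξ := by
        apply intervalIntegral.integral_congr
        intro ξ _
        exact intervalIntegral.integral_mul_const _ _
      rw [step1, step2, step3]
    -- the vanishing integral coming from the kernel PDE
    have hzero : ∫ ξ in (0:ℝ)..z,
        ((Fe z ξ + Ky z ξ - (∫ s in ξ..z, K z s * Fe s ξ) + Kx z ξ) * Ub t ξ) = 0 := by
      rw [integral_congr_Ioo hz0 (g := fun _ => (0:ℝ))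
        (fun ξ hξ => by
          have h := hker ξ hξ
          have hb : Fe z ξ + Ky z ξ - (∫ s in ξ..z, K z s * Fe s ξ) + Kx z ξ = 0 := by
            linarith
          rw [hb, zero_mul])]
      simp
    have hexp : (∫ ξ in (0:ℝ)..z, Fe z ξ * Ub t ξ) + (∫ ξ in (0:ℝ)..z, Ky z ξ * Ub t ξ)
        - (∫ ξ in (0:ℝ)..z, (∫ s in ξ..z, K z s * Fe s ξ) * Ub t ξ)
        + (∫ ξ in (0:ℝ)..z, Kx z ξ * Ub t ξ) = 0 := by
      have e : (fun ξ => (Fe z ξ + Ky z ξ - (∫ s in ξ..z, K z s * Fe s ξ) + Kx z ξ) * Ub t ξ)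
          = fun ξ => (Fe z ξ * Ub t ξ + Ky z ξ * Ub t ξ
              - (∫ s in ξ..z, K z s * Fe s ξ) * Ub t ξ) + Kx z ξ * Ub t ξ :=
        funext fun ξ => by ring
      rw [e] at hzero
      rw [intervalIntegral.integral_add
          (f := fun ξ => Fe z ξ * Ub t ξ + Ky z ξ * Ub t ξ - (∫ s in ξ..z, K z s * Fe s ξ) * Ub t ξ)
          (g := fun ξ => Kx z ξ * Ub t ξ)
          (((((cFeZ.mul cUb)).add (cKy.mul cUb)).sub ((cKFint.mul cUb))).intervalIntegrable _ _)
          ((cKx.mul cUb).intervalIntegrable _ _),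
        intervalIntegral.integral_sub
          (f := fun ξ => Fe z ξ * Ub t ξ + Ky z ξ * Ub t ξ)
          (g := fun ξ => (∫ s in ξ..z, K z s * Fe s ξ) * Ub t ξ)
          (((cFeZ.mul cUb).add (cKy.mul cUb)).intervalIntegrable _ _)
          ((cKFint.mul cUb).intervalIntegrable _ _),
        intervalIntegral.integral_add (f := fun ξ => Fe z ξ * Ub t ξ) (g := fun ξ => Ky z ξ * Ub t ξ) ((cFeZ.mul cUb).intervalIntegrable _ _)
          ((cKy.mul cUb).intervalIntegrable _ _)] at hzero
      linarith
    -- assemble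
    have hI5 : ∫ ξ in (0:ℝ)..z, Fe z ξ * Ub t ξ = ∫ ξ in (0:ℝ)..z, Fe z ξ * Ub t ξ := rfl
    rw [hDval t z, hTe_pde z hz0 hz1, hsplit, hC3]
    linear_combination (-1 : ℝ) * hIBP2 + Ub t 0 * hbc + hexp
  -- space representation
  have hF2 : ∀ t : ℝ, 0 ≤ t → ∀ x ∈ Icc (0:ℝ) 1, W t x = W t 0 + ∫ z in (0:ℝ)..x, D t z := by
    intro t ht x hx
    have cUb : Continuous fun ξ => Ub t ξ := hUbc.comp (continuous_const.prodMk continuous_id)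
    have cXe : Continuous fun ξ => Xe t ξ := hXc.comp (continuous_const.prodMk continuous_id)
    have cdiag : Continuous fun ξ : ℝ => K ξ ξ * Ub t ξ :=
      (hKc.comp (continuous_id.prodMk continuous_id)).mul cUb
    have ctail : Continuous fun ξ => ∫ zz in ξ..x, Kx zz ξ * Ub t ξ := by
      have hcc : Continuous fun ξ => ∫ zz in x..ξ, Kx zz ξ * Ub t ξ := by
        apply intervalIntegral.continuous_parametric_intervalIntegral_of_continuous
          (f := fun (ξ : ℝ) zz => Kx zz ξ * Ub t ξ) (s := fun ξ : ℝ => ξ)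
        · exact (hKxc.comp (continuous_snd.prodMk continuous_fst)).mul
            (hUbc.comp (continuous_const.prodMk continuous_fst))
        · exact continuous_id
      have heq : (fun ξ => ∫ zz in ξ..x, Kx zz ξ * Ub t ξ)
          = fun ξ => -∫ zz in x..ξ, Kx zz ξ * Ub t ξ :=
        funext fun ξ => intervalIntegral.integral_symm _ _
      rw [heq]
      exact hcc.neg
    have cinn : Continuous fun zz => ∫ ξ in (0:ℝ)..zz, Kx zz ξ * Ub t ξ := by
      apply intervalIntegral.continuous_parametric_intervalIntegral_of_continuous
        (f := fun (zz : ℝ) ξ => Kx zz ξ * Ub t ξ) (s := fun zz : ℝ => zz)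
      · exact (hKxc.comp (continuous_fst.prodMk continuous_snd)).mul
          (hUbc.comp (continuous_const.prodMk continuous_snd))
      · exact continuous_id
    -- (i) FTC for Ub in space
    have h_i : Ub t x = Ub t 0 + ∫ z in (0:ℝ)..x, Xe t z := by
      have hftc : ∫ z in (0:ℝ)..x, Xe t z = u t x - u t 0 := by
        apply my_ftc (φ := fun y => u t y) hx.1
        · intro y hy
          exact ((hux t (mem_Ici.mpr ht) y ⟨hy.1, hy.2.trans hx.2⟩).continuousWithinAt).mono
            (Icc_subset_Icc le_rfl hx.2)
        · intro ξ hξ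
          have hm : ξ ∈ Icc (0:ℝ) 1 := ⟨hξ.1.le, (hξ.2.trans_le hx.2).le⟩
          have h := (hux t (mem_Ici.mpr ht) ξ hm).hasDerivAt
            (Icc_mem_nhds hξ.1 (hξ.2.trans_le hx.2))
          rw [hXeq t ht ξ hm]
          exact h
        · exact cXe.intervalIntegrable _ _
      rw [hu_eq t (mem_Ici.mpr ht) x hx, hu_eq t (mem_Ici.mpr ht) 0 ⟨le_rfl, zero_le_one⟩]
      linarith
    -- (ii) Fubini for the kernel integral
    have h_ii : ∫ ξ in (0:ℝ)..x, K x ξ * Ub t ξ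
        = ∫ z in (0:ℝ)..x, (K z z * Ub t z + ∫ ξ in (0:ℝ)..z, Kx z ξ * Ub t ξ) := by
      have step1 : ∫ ξ in (0:ℝ)..x, K x ξ * Ub t ξ
          = ∫ ξ in (0:ℝ)..x, (K ξ ξ * Ub t ξ + ∫ zz in ξ..x, Kx zz ξ * Ub t ξ) := by
        apply intervalIntegral.integral_congr
        intro ξ hξ
        rw [uIcc_of_le hx.1] at hξ
        show K x ξ * Ub t ξ = K ξ ξ * Ub t ξ + ∫ zz in ξ..x, Kx zz ξ * Ub t ξ
        rw [hKFTC x ξ hξ.1 hξ.2 hx.2,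
          show (∫ zz in ξ..x, Kx zz ξ * Ub t ξ) = (∫ zz in ξ..x, Kx zz ξ) * Ub t ξ from
            intervalIntegral.integral_mul_const _ _]
        ring
      have step2 : ∫ ξ in (0:ℝ)..x, (K ξ ξ * Ub t ξ + ∫ zz in ξ..x, Kx zz ξ * Ub t ξ)
          = (∫ ξ in (0:ℝ)..x, K ξ ξ * Ub t ξ)
            + ∫ ξ in (0:ℝ)..x, ∫ zz in ξ..x, Kx zz ξ * Ub t ξ :=
        intervalIntegral.integral_add (cdiag.intervalIntegrable _ _)
          (ctail.intervalIntegrable _ _)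
      have hΦ : Continuous fun p : ℝ × ℝ => Kx p.1 p.2 * Ub t p.2 :=
        hKxc.mul (hUbc.comp (continuous_const.prodMk continuous_snd))
      have step3 := (tri_swap (Φ := fun a b => Kx a b * Ub t b) hΦ hx.1).symm
      have step4 : (∫ ξ in (0:ℝ)..x, K ξ ξ * Ub t ξ)
          + ∫ z in (0:ℝ)..x, ∫ ξ in (0:ℝ)..z, Kx z ξ * Ub t ξ
          = ∫ z in (0:ℝ)..x, (K z z * Ub t z + ∫ ξ in (0:ℝ)..z, Kx z ξ * Ub t ξ) :=
        (intervalIntegral.integral_add (cdiag.intervalIntegrable _ _)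
          (cinn.intervalIntegrable _ _)).symm
      rw [step1, step2, step3, step4]
    -- conclude
    have e5 : ∫ z in (0:ℝ)..x, D t z
        = ∫ z in (0:ℝ)..x,
            (Xe t z - (K z z * Ub t z + ∫ ξ in (0:ℝ)..z, Kx z ξ * Ub t ξ)) := by
      apply intervalIntegral.integral_congr
      intro z hz
      rw [uIcc_of_le hx.1] at hz
      rw [hDX t ht z hz.1 (hz.2.trans hx.2)]
      ring
    have e6 : ∫ z in (0:ℝ)..x,
          (Xe t z - (K z z * Ub t z + ∫ ξ in (0:ℝ)..z, Kx z ξ * Ub t ξ))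
        = (∫ z in (0:ℝ)..x, Xe t z)
          - ∫ z in (0:ℝ)..x, (K z z * Ub t z + ∫ ξ in (0:ℝ)..z, Kx z ξ * Ub t ξ) :=
      intervalIntegral.integral_sub (cXe.intervalIntegrable _ _)
        ((cdiag.add cinn).intervalIntegrable _ _)
    have hW0 : W t 0 = Ub t 0 := by
      rw [hWval, intervalIntegral.integral_same, sub_zero]
    rw [hWval, hW0, e5, e6, h_i]
    linarith [h_ii]
  -- boundary condition
  have hWt1 : ∀ t : ℝ, 0 ≤ t → W t 1 = 0 := by
    intro t ht
    have hcongr : ∫ ξ in (0:ℝ)..1, K 1 ξ * Ub t ξ = ∫ y in (0:ℝ)..1, k 1 y * u t y := by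
      apply intervalIntegral.integral_congr
      intro y hy
      rw [uIcc_of_le zero_le_one] at hy
      show K 1 y * Ub t y = k 1 y * u t y
      rw [hKeq 1 y ⟨hy.1, hy.2, le_rfl⟩, hu_eq t (mem_Ici.mpr ht) y hy]
    rw [hWval, hcongr, hu_eq t (mem_Ici.mpr ht) 1 ⟨zero_le_one, le_rfl⟩,
      hfeedback t (mem_Ici.mpr ht), sub_self]
  refine ⟨⟨D, ?_⟩, ?_, ?_⟩
  · -- the two derivatives
    intro t ht x hx
    constructor
    · -- time derivative
      have hR : HasDerivAt (fun s => W 0 x + ∫ τ in (0:ℝ)..s, D τ x) (D t x) t :=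
        (hasDerivAt_primitive (hDc.comp (continuous_id.prodMk continuous_const)) 0 t).const_add
          (W 0 x)
      apply (hR.hasDerivWithinAt).congr
      · intro s hs
        exact ((hW_eq s hs x hx).symm.trans (hF1 x hx s hs))
      · exact ((hW_eq t ht x hx).symm.trans (hF1 x hx t ht))
    · -- space derivative
      have hR : HasDerivAt (fun y => W t 0 + ∫ z in (0:ℝ)..y, D t z) (D t x) x :=
        (hasDerivAt_primitive (hDc.comp (continuous_const.prodMk continuous_id)) 0 x).const_add
          (W t 0)
      apply (hR.hasDerivWithinAt).congr
      · intro y hy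
        exact ((hW_eq t ht y hy).symm.trans (hF2 t ht y hy))
      · exact ((hW_eq t ht x hx).symm.trans (hF2 t ht x hx))
  · -- boundary condition
    intro t ht
    rw [← hW_eq t ht 1 ⟨zero_le_one, le_rfl⟩]
    exact hWt1 t ht
  · -- finite-time vanishing
    intro t ht x hx hsum
    have ht' : (0:ℝ) ≤ t := ht
    have hL0 : (0:ℝ) ≤ 1 - x := by linarith [hx.2]
    have hLt : 1 - x ≤ t := by linarith
    have hh : Continuous fun s : ℝ => W (t - s) (x + s) :=
      hWc.comp ((continuous_const.sub continuous_id).prodMk (continuous_const.add continuous_id))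
    have hder : ∀ s ∈ Ico (0:ℝ) (1 - x),
        HasDerivWithinAt (fun s' => W (t - s') (x + s')) 0 (Ici s) s := by
      intro s hs
      have hs0 : 0 ≤ s := hs.1
      have hsL : s < 1 - x := hs.2
      rw [hasDerivWithinAt_iff_isLittleO]
      rw [Asymptotics.isLittleO_iff]
      intro c hc
      have hc2 : (0:ℝ) < c / 2 := by linarith
      obtain ⟨δ, hδ0, hδ⟩ := Metric.continuousAt_iff.mp
        (hDc.continuousAt (x := (t - s, x + s))) (c / 2) hc2
      filter_upwards [Icc_mem_nhdsGE_of_mem (⟨le_rfl, hsL⟩ : s ∈ Ico s (1 - x)),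
        mem_nhdsWithin_of_mem_nhds (Metric.ball_mem_nhds s hδ0)] with s' hs'1 hs'2
      have hss' : s ≤ s' := hs'1.1
      have hs'L : s' ≤ 1 - x := hs'1.2
      have hdist : |s' - s| < δ := by
        have := hs'2
        rw [Metric.mem_ball, Real.dist_eq] at this
        exact this
      have hts'0 : (0:ℝ) ≤ t - s' := by linarith
      have hts0 : (0:ℝ) ≤ t - s := by linarith
      have hxs' : x + s' ∈ Icc (0:ℝ) 1 := ⟨by linarith [hx.1], by linarith⟩
      have hxs : x + s ∈ Icc (0:ℝ) 1 := ⟨by linarith [hx.1], by linarith⟩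
      have cD1 : Continuous fun zz => D (t - s') zz :=
        hDc.comp (continuous_const.prodMk continuous_id)
      have cD2 : Continuous fun τ => D τ (x + s) :=
        hDc.comp (continuous_id.prodMk continuous_const)
      -- difference formula
      have hdiff1 : W (t - s') (x + s') - W (t - s') (x + s)
          = ∫ zz in (x + s)..(x + s'), D (t - s') zz := by
        rw [hF2 (t - s') hts'0 (x + s') hxs', hF2 (t - s') hts'0 (x + s) hxs]
        have h := intervalIntegral.integral_interval_sub_left
          (f := fun zz => D (t - s') zz) (μ := volume) (a := 0) (b := x + s') (c := x + s)
          (cD1.intervalIntegrable _ _) (cD1.intervalIntegrable _ _)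
        linarith [h]
      have hdiff2 : W (t - s') (x + s) - W (t - s) (x + s)
          = -∫ τ in (t - s')..(t - s), D τ (x + s) := by
        rw [hF1 (x + s) hxs (t - s') hts'0, hF1 (x + s) hxs (t - s) hts0]
        have h := intervalIntegral.integral_interval_sub_left
          (f := fun τ => D τ (x + s)) (μ := volume) (a := 0) (b := t - s) (c := t - s')
          (cD2.intervalIntegrable _ _) (cD2.intervalIntegrable _ _)
        linarith [h]
      -- split off the constant value
      have hsplitA : ∫ zz in (x + s)..(x + s'), D (t - s') zz
          = (∫ zz in (x + s)..(x + s'), (D (t - s') zz - D (t - s) (x + s)))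
            + (s' - s) * D (t - s) (x + s) := by
        rw [intervalIntegral.integral_sub (cD1.intervalIntegrable _ _)
          (_root_.intervalIntegrable_const (c := D (t - s) (x + s)))]
        rw [intervalIntegral.integral_const]
        have : (x + s' - (x + s)) = s' - s := by ring
        rw [this, smul_eq_mul]
        ring
      have hsplitB : ∫ τ in (t - s')..(t - s), D τ (x + s)
          = (∫ τ in (t - s')..(t - s), (D τ (x + s) - D (t - s) (x + s)))
            + (s' - s) * D (t - s) (x + s) := by
        rw [intervalIntegral.integral_sub (cD2.intervalIntegrable _ _)
          (_root_.intervalIntegrable_const (c := D (t - s) (x + s)))]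
        rw [intervalIntegral.integral_const]
        have : (t - s - (t - s')) = s' - s := by ring
        rw [this, smul_eq_mul]
        ring
      -- bounds
      have hboundA : ‖∫ zz in (x + s)..(x + s'), (D (t - s') zz - D (t - s) (x + s))‖
          ≤ (c / 2) * |x + s' - (x + s)| := by
        apply intervalIntegral.norm_integral_le_of_norm_le_const
        intro zz hzz
        rw [uIoc_of_le (by linarith : x + s ≤ x + s')] at hzz
        have hdd : dist ((t - s', zz) : ℝ × ℝ) ((t - s, x + s) : ℝ × ℝ) < δ := by
          rw [Prod.dist_eq]
          apply max_lt
          · rw [Real.dist_eq]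
            calc |t - s' - (t - s)| = |s' - s| := by rw [show t - s' - (t - s) = -(s' - s) by ring, abs_neg]
            _ < δ := hdist
          · rw [Real.dist_eq]
            have h1 : 0 < zz - (x + s) := by linarith [hzz.1]
            have h2 : zz - (x + s) ≤ s' - s := by linarith [hzz.2]
            calc |zz - (x + s)| = zz - (x + s) := abs_of_pos h1
            _ ≤ s' - s := h2
            _ ≤ |s' - s| := le_abs_self _
            _ < δ := hdist
        have := hδ hdd
        rw [Real.dist_eq] at this
        simpa [Real.norm_eq_abs] using this.le
      have hboundB : ‖∫ τ in (t - s')..(t - s), (D τ (x + s) - D (t - s) (x + s))‖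
          ≤ (c / 2) * |t - s - (t - s')| := by
        apply intervalIntegral.norm_integral_le_of_norm_le_const
        intro τ hτ
        rw [uIoc_of_le (by linarith : t - s' ≤ t - s)] at hτ
        have hdd : dist ((τ, x + s) : ℝ × ℝ) ((t - s, x + s) : ℝ × ℝ) < δ := by
          rw [Prod.dist_eq]
          apply max_lt
          · rw [Real.dist_eq]
            have h1 : τ - (t - s) ≤ 0 := by linarith [hτ.2]
            have h2 : (t - s) - τ < s' - s := by linarith [hτ.1]
            calc |τ - (t - s)| = (t - s) - τ := by rw [abs_of_nonpos h1]; ring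
            _ ≤ s' - s := h2.le
            _ ≤ |s' - s| := le_abs_self _
            _ < δ := hdist
          · rw [Real.dist_eq]
            simpa using hδ0
        have := hδ hdd
        rw [Real.dist_eq] at this
        simpa [Real.norm_eq_abs] using this.le
      -- conclude the little-o bound
      have habs1 : |x + s' - (x + s)| = s' - s := by
        rw [show x + s' - (x + s) = s' - s by ring, abs_of_nonneg (by linarith)]
      have habs2 : |t - s - (t - s')| = s' - s := by
        rw [show t - s - (t - s') = s' - s by ring, abs_of_nonneg (by linarith)]
      rw [Real.norm_eq_abs] at hboundA hboundB
      rw [habs1] at hboundA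
      rw [habs2] at hboundB
      simp only [smul_zero, sub_zero, Real.norm_eq_abs]
      have hkey : W (t - s') (x + s') - W (t - s) (x + s)
          = (∫ zz in (x + s)..(x + s'), (D (t - s') zz - D (t - s) (x + s)))
            - ∫ τ in (t - s')..(t - s), (D τ (x + s) - D (t - s) (x + s)) := by
        have := hdiff1
        have := hdiff2
        linarith [hdiff1, hdiff2, hsplitA, hsplitB]
      rw [hkey]
      have habs' : |s' - s| = s' - s := abs_of_nonneg (by linarith)
      calc |(∫ zz in (x + s)..(x + s'), (D (t - s') zz - D (t - s) (x + s)))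
            - ∫ τ in (t - s')..(t - s), (D τ (x + s) - D (t - s) (x + s))|
          ≤ |∫ zz in (x + s)..(x + s'), (D (t - s') zz - D (t - s) (x + s))|
            + |∫ τ in (t - s')..(t - s), (D τ (x + s) - D (t - s) (x + s))| := abs_sub _ _
        _ ≤ (c / 2) * (s' - s) + (c / 2) * (s' - s) := add_le_add hboundA hboundB
        _ = c * (s' - s) := by ring
        _ = c * |s' - s| := by rw [habs']
    have hconst := constant_of_has_deriv_right_zero
      (f := fun s' => W (t - s') (x + s')) (a := 0) (b := 1 - x)
      hh.continuousOn hder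
    have hL' : W (t - (1 - x)) (x + (1 - x)) = W (t - 0) (x + 0) :=
      hconst (1 - x) ⟨hL0, le_rfl⟩
    have hfin : W (t - (1 - x)) (x + (1 - x)) = 0 := by
      rw [show x + (1 - x) = (1:ℝ) by ring]
      exact hWt1 (t - (1 - x)) (by linarith)
    rw [← hW_eq t ht x hx]
    have h0 : W (t - 0) (x + 0) = W t x := by norm_num
    rw [← h0, ← hL']
    exact hfin
end

section
/- Let A ∈ ℝ^{p×p}, B ∈ ℝ^{p×m}, K₀ ∈ ℝ^{m×p}, and τ > 0. Suppose U : ℝ → ℝ^m is continuous, X : ℝ → ℝ^p is continuously differentiable, Ẋ(s) = A X(s) + B U(s − τ) holds for all s ≥ 0, and the predictor feedback U(t) = K₀ (e^{τA} X(t) + τ ∫₀¹ e^{τA(1−y)} B U(t − τ(1−y)) dy) holds for all t ≥ 0. Then U(t − τ) = K₀ X(t) for all t ≥ τ, and consequently Ẋ(t) = (A + B K₀) X(t) for all t ≥ τ; in particular, the closed-loop dynamics after time τ coincide exactly with the delay-free state feedback dynamics assigned by K₀. -/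
open Set

open NormedSpace in
private lemma matexp_entry_hasDerivAt (p : ℕ) (A : Matrix (Fin p) (Fin p) ℝ) (s : ℝ)
    (i j : Fin p) :
    HasDerivAt (fun t : ℝ => exp (t • A) i j) ((exp (s • A) * A) i j) s := by
  letI : SeminormedRing (Matrix (Fin p) (Fin p) ℝ) := Matrix.linftyOpSemiNormedRing
  letI : NormedRing (Matrix (Fin p) (Fin p) ℝ) := Matrix.linftyOpNormedRing
  letI : NormedAlgebra ℝ (Matrix (Fin p) (Fin p) ℝ) := Matrix.linftyOpNormedAlgebra
  have h := hasDerivAt_exp_smul_const A s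
  let L0 : Matrix (Fin p) (Fin p) ℝ →ₗ[ℝ] ℝ :=
    { toFun := fun M => M i j, map_add' := fun _ _ => rfl, map_smul' := fun _ _ => rfl }
  let L : Matrix (Fin p) (Fin p) ℝ →L[ℝ] ℝ := LinearMap.toContinuousLinearMap L0
  exact L.hasFDerivAt.comp_hasDerivAt s h

open NormedSpace in
private lemma matexp_entry_continuous (p : ℕ) (A : Matrix (Fin p) (Fin p) ℝ) (i j : Fin p) :
    Continuous (fun t : ℝ => exp (t • A) i j) :=
  continuous_iff_continuousAt.2 fun s => (matexp_entry_hasDerivAt p A s i j).continuousAt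

open NormedSpace in
private lemma matexp_add (p : ℕ) (A : Matrix (Fin p) (Fin p) ℝ) (a b : ℝ) :
    exp ((a + b) • A) = exp (a • A) * exp (b • A) := by
  rw [add_smul]
  exact Matrix.exp_add_of_commute _ _ (((Commute.refl A).smul_left a).smul_right b)

/-- Under the backstepping predictor feedback
`U(t) = K₀ (e^{τA} X(t) + τ ∫₀¹ e^{τA(1−y)} B U(t−τ(1−y)) dy)`, the closed loop satisfies
`U(t−τ) = K₀ X(t)` for `t ≥ τ`, and hence `Ẋ(t) = (A + B K₀) X(t)` for `t ≥ τ`. -/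
theorem predictor_feedback_closed_loop
    (p m : ℕ) (A : Matrix (Fin p) (Fin p) ℝ) (B : Matrix (Fin p) (Fin m) ℝ)
    (K₀ : Matrix (Fin m) (Fin p) ℝ) (τ : ℝ) (hτ : 0 < τ)
    (U : ℝ → Fin m → ℝ) (hU : Continuous U)
    (X : ℝ → Fin p → ℝ) (hX_C1 : ContDiff ℝ 1 X)
    (hX : ∀ s : ℝ, 0 ≤ s →
      HasDerivAt X (A.mulVec (X s) + B.mulVec (U (s - τ))) s)
    (hfeedback : ∀ t : ℝ, 0 ≤ t →
      U t = K₀.mulVec ((NormedSpace.exp (τ • A)).mulVec (X t) +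
        τ • ∫ y in (0:ℝ)..1,
          (NormedSpace.exp ((τ * (1 - y)) • A)).mulVec
            (B.mulVec (U (t - τ * (1 - y)))))) :
    (∀ t : ℝ, τ ≤ t → U (t - τ) = K₀.mulVec (X t)) ∧
    (∀ t : ℝ, τ ≤ t → HasDerivAt X ((A + B * K₀).mulVec (X t)) t) := by
  set E : ℝ → Matrix (Fin p) (Fin p) ℝ := fun s => NormedSpace.exp (s • A) with hE
  -- derivative of the backwards-propagated state
  have hF : ∀ s : ℝ, 0 ≤ s → HasDerivAt (fun u : ℝ => (E (-u)).mulVec (X u))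
      ((E (-s)).mulVec (B.mulVec (U (s - τ)))) s := by
    intro s hs
    have hXd := hasDerivAt_pi.1 (hX s hs)
    have key : HasDerivAt (fun u : ℝ => (E (-u)).mulVec (X u))
        ((-(E (-s) * A)).mulVec (X s) +
          (E (-s)).mulVec (A.mulVec (X s) + B.mulVec (U (s - τ)))) s := by
      rw [hasDerivAt_pi]
      intro i
      have h1 : ∀ j, HasDerivAt (fun u : ℝ => E (-u) i j) (-((E (-s) * A) i j)) s := by
        intro j
        have := (matexp_entry_hasDerivAt p A (-s) i j).comp s (hasDerivAt_neg s)
        simpa [Function.comp_def, hE] using this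
      have h2 : HasDerivAt (fun u : ℝ => ∑ j, E (-u) i j * X u j)
          (∑ j, (-((E (-s) * A) i j) * X s j +
            E (-s) i j * ((A.mulVec (X s) + B.mulVec (U (s - τ))) j))) s :=
        HasDerivAt.fun_sum fun j _ => (h1 j).mul (hXd j)
      have hfun : (fun u : ℝ => (E (-u)).mulVec (X u) i)
          = fun u : ℝ => ∑ j, E (-u) i j * X u j := by
        funext u; simp [Matrix.mulVec, dotProduct]
      have hval : ((-(E (-s) * A)).mulVec (X s) +
          (E (-s)).mulVec (A.mulVec (X s) + B.mulVec (U (s - τ)))) i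
          = ∑ j, (-((E (-s) * A) i j) * X s j +
            E (-s) i j * ((A.mulVec (X s) + B.mulVec (U (s - τ))) j)) := by
        simp [Matrix.mulVec, dotProduct, Finset.sum_add_distrib, neg_mul]
      rw [hfun, hval]
      exact h2
    have hsimp : (-(E (-s) * A)).mulVec (X s) +
        (E (-s)).mulVec (A.mulVec (X s) + B.mulVec (U (s - τ)))
        = (E (-s)).mulVec (B.mulVec (U (s - τ))) := by
      rw [Matrix.mulVec_add, Matrix.mulVec_mulVec, Matrix.neg_mulVec]
      abel
    rwa [hsimp] at key
  -- continuity of the integrand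
  have hGcont : Continuous (fun s : ℝ => (E (-s)).mulVec (B.mulVec (U (s - τ)))) := by
    apply continuous_pi
    intro i
    simp only [Matrix.mulVec, dotProduct]
    apply continuous_finset_sum
    intro j _
    refine (((matexp_entry_continuous p A i j).comp continuous_neg).mul ?_)
    apply continuous_finset_sum
    intro k _
    exact continuous_const.mul ((continuous_apply k).comp
      (hU.comp (continuous_id.sub continuous_const)))
  -- the main predictor identity
  have main : ∀ t : ℝ, τ ≤ t →
      (NormedSpace.exp (τ • A)).mulVec (X (t - τ)) +
        τ • ∫ y in (0:ℝ)..1, (NormedSpace.exp ((τ * (1 - y)) • A)).mulVec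
          (B.mulVec (U ((t - τ) - τ * (1 - y)))) = X t := by
    intro t ht
    have h0 : (0:ℝ) ≤ t - τ := by linarith
    have hderiv : ∀ s ∈ Set.uIcc (t - τ) t,
        HasDerivAt (fun u : ℝ => (E (-u)).mulVec (X u))
          ((E (-s)).mulVec (B.mulVec (U (s - τ)))) s := by
      intro s hs
      rw [Set.uIcc_of_le (by linarith)] at hs
      exact hF s (by linarith [hs.1])
    have hint : IntervalIntegrable (fun s : ℝ => (E (-s)).mulVec (B.mulVec (U (s - τ))))
        MeasureTheory.volume (t - τ) t := hGcont.intervalIntegrable _ _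
    have hFTC := intervalIntegral.integral_eq_sub_of_hasDerivAt hderiv hint
    set Lt : (Fin p → ℝ) →L[ℝ] (Fin p → ℝ) :=
      LinearMap.toContinuousLinearMap (Matrix.mulVecLin (E t)) with hLtdef
    have hLt : ∀ v : Fin p → ℝ, Lt v = (E t).mulVec v := by
      intro v; simp [hLtdef]
    have hcomm := Lt.intervalIntegral_comp_comm hint
    have e1 : (E t).mulVec ((E (-t)).mulVec (X t)) = X t := by
      rw [Matrix.mulVec_mulVec, hE]
      rw [← matexp_add p A t (-t), show t + -t = (0:ℝ) by ring, zero_smul,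
        NormedSpace.exp_zero, Matrix.one_mulVec]
    have e2 : (E t).mulVec ((E (-(t - τ))).mulVec (X (t - τ)))
        = (NormedSpace.exp (τ • A)).mulVec (X (t - τ)) := by
      rw [Matrix.mulVec_mulVec, hE]
      rw [← matexp_add p A t (-(t - τ)), show t + -(t - τ) = τ by ring]
    have LHSeq : Lt (∫ s in (t - τ)..t, (E (-s)).mulVec (B.mulVec (U (s - τ))))
        = X t - (NormedSpace.exp (τ • A)).mulVec (X (t - τ)) := by
      rw [hFTC, map_sub, hLt, hLt, e1, e2]
    have RHSeq : Lt (∫ s in (t - τ)..t, (E (-s)).mulVec (B.mulVec (U (s - τ))))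
        = ∫ s in (t - τ)..t, (NormedSpace.exp ((t - s) • A)).mulVec
            (B.mulVec (U (s - τ))) := by
      rw [← hcomm]
      refine intervalIntegral.integral_congr fun s _ => ?_
      rw [hLt, Matrix.mulVec_mulVec, hE]
      rw [show t - s = t + -s by ring, matexp_add p A t (-s)]
    have key : X t = (NormedSpace.exp (τ • A)).mulVec (X (t - τ)) +
        ∫ s in (t - τ)..t, (NormedSpace.exp ((t - s) • A)).mulVec
          (B.mulVec (U (s - τ))) := by
      rw [← RHSeq, LHSeq]; abel
    have hcv := intervalIntegral.integral_comp_mul_add (a := (0:ℝ)) (b := 1)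
      (fun s : ℝ => (NormedSpace.exp ((t - s) • A)).mulVec (B.mulVec (U (s - τ))))
      hτ.ne' (t - τ)
    rw [show τ * 0 + (t - τ) = t - τ by ring, show τ * 1 + (t - τ) = t by ring] at hcv
    have hcong : (∫ y in (0:ℝ)..1,
        (NormedSpace.exp ((t - (τ * y + (t - τ))) • A)).mulVec
          (B.mulVec (U ((τ * y + (t - τ)) - τ))))
        = ∫ y in (0:ℝ)..1, (NormedSpace.exp ((τ * (1 - y)) • A)).mulVec
          (B.mulVec (U ((t - τ) - τ * (1 - y)))) := by
      refine intervalIntegral.integral_congr fun y _ => ?_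
      rw [show t - (τ * y + (t - τ)) = τ * (1 - y) by ring,
        show (τ * y + (t - τ)) - τ = (t - τ) - τ * (1 - y) by ring]
    rw [← hcong, hcv, smul_smul, mul_inv_cancel₀ hτ.ne', one_smul, ← key]
  have h1 : ∀ t : ℝ, τ ≤ t → U (t - τ) = K₀.mulVec (X t) := by
    intro t ht
    rw [hfeedback (t - τ) (by linarith), main t ht]
  refine ⟨h1, fun t ht => ?_⟩
  have hd := hX t (by linarith)
  rw [h1 t ht] at hd
  rwa [Matrix.add_mulVec, ← Matrix.mulVec_mulVec]
end

section
/- Let λ > 0, μ > 0, and q ∈ ℝ. Suppose α, β : [0,∞) × [0,1] → ℝ are continuously differentiable and satisfy the transport equations α_t(t,x) + λ α_x(t,x) = 0 and β_t(t,x) − μ β_x(t,x) = 0 for all t ≥ 0 and x ∈ [0,1], together with the boundary conditions α(t,0) = q β(t,0) and β(t,1) = 0 for all t ≥ 0. Then β(t,x) = 0 for all t ≥ (1−x)/μ, and α(t,x) = β(t,x) = 0 for all x ∈ [0,1] whenever t ≥ 1/λ + 1/μ; that is, the target system is finite-time stable with settling time t_F = 1/λ + 1/μ. -/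
open Set

private lemma abs_sub_le_of_mem_uIcc' {a b t : ℝ} (h : t ∈ uIcc a b) : |t - a| ≤ |b - a| := by
  rcases le_total a b with h' | h'
  · rw [uIcc_of_le h'] at h
    rw [abs_of_nonneg (by linarith [h.1] : (0:ℝ) ≤ t - a),
      abs_of_nonneg (by linarith : (0:ℝ) ≤ b - a)]
    linarith [h.2]
  · rw [uIcc_of_ge h'] at h
    rw [abs_of_nonpos (by linarith [h.2] : t - a ≤ 0),
      abs_of_nonpos (by linarith : b - a ≤ 0)]
    linarith [h.1]

/-- A C¹ function satisfying `f_t = c f_x` is constant along the characteristic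
`s ↦ (t₀ - s, x₀ + c s)` as long as it stays in the domain `[0,∞) × [0,1]`. -/
private lemma const_along_char (f ft fx : ℝ → ℝ → ℝ) (c : ℝ)
    (hft : ∀ t : ℝ, 0 ≤ t → ∀ x ∈ Icc (0:ℝ) 1,
      HasDerivWithinAt (fun s => f s x) (ft t x) (Ici 0) t)
    (hfx : ∀ t : ℝ, 0 ≤ t → ∀ x ∈ Icc (0:ℝ) 1,
      HasDerivWithinAt (fun y => f t y) (fx t x) (Icc 0 1) x)
    (hft_cont : ContinuousOn (fun p : ℝ × ℝ => ft p.1 p.2) (Ici 0 ×ˢ Icc 0 1))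
    (hfx_cont : ContinuousOn (fun p : ℝ × ℝ => fx p.1 p.2) (Ici 0 ×ˢ Icc 0 1))
    (hpde : ∀ t : ℝ, 0 ≤ t → ∀ x ∈ Icc (0:ℝ) 1, ft t x = c * fx t x)
    (t₀ x₀ S : ℝ) (hS : 0 ≤ S)
    (hmem : ∀ s ∈ Icc (0:ℝ) S, 0 ≤ t₀ - s ∧ x₀ + c * s ∈ Icc (0:ℝ) 1) :
    f (t₀ - S) (x₀ + c * S) = f t₀ x₀ := by
  set g : ℝ → ℝ := fun s => f (t₀ - s) (x₀ + c * s) with hg_def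
  have hg : ∀ s₀ ∈ Icc (0:ℝ) S, HasDerivWithinAt g 0 (Icc 0 S) s₀ := by
    intro s₀ hs₀
    obtain ⟨hT, hX⟩ := hmem s₀ hs₀
    set T := t₀ - s₀ with hT_def
    set X := x₀ + c * s₀ with hX_def
    set K := ft T X with hK_def
    set L := fx T X with hL_def
    have hD : -K + c * L = 0 := by
      rw [hK_def, hL_def, hpde T hT X hX]; ring
    suffices hgoal : HasDerivWithinAt g (-K + c * L) (Icc 0 S) s₀ by
      exact hD ▸ hgoal
    rw [hasDerivWithinAt_iff_isLittleO, Asymptotics.isLittleO_iff]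
    intro ε hε
    have hc1 : (0:ℝ) < 1 + |c| := by positivity
    set ε' : ℝ := ε / (1 + |c|) with hε'_def
    have hε' : 0 < ε' := by positivity
    have hmemTX : (T, X) ∈ (Ici (0:ℝ) ×ˢ Icc (0:ℝ) 1) := ⟨hT, hX⟩
    have hct := hft_cont (T, X) hmemTX
    have hcx := hfx_cont (T, X) hmemTX
    rw [Metric.continuousWithinAt_iff] at hct hcx
    obtain ⟨δ₁, hδ₁, hδ₁'⟩ := hct ε' hε'
    obtain ⟨δ₂, hδ₂, hδ₂'⟩ := hcx ε' hε'
    set δ : ℝ := min δ₁ δ₂ with hδ_def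
    have hδ : 0 < δ := lt_min hδ₁ hδ₂
    set η : ℝ := δ / (1 + |c|) with hη_def
    have hη : 0 < η := by positivity
    filter_upwards [self_mem_nhdsWithin,
      mem_nhdsWithin_of_mem_nhds (Metric.ball_mem_nhds s₀ hη)] with s' hs' hball
    have hclose : |s' - s₀| < η := by
      rw [Metric.mem_ball, Real.dist_eq] at hball; exact hball
    obtain ⟨hT', hX'⟩ := hmem s' hs'
    set y : ℝ := x₀ + c * s' with hy_def
    have habs_t : |(t₀ - s') - T| = |s' - s₀| := by
      rw [hT_def, show t₀ - s' - (t₀ - s₀) = -(s' - s₀) by ring, abs_neg]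
    have habs_x : |y - X| = |c| * |s' - s₀| := by
      rw [hy_def, hX_def, show x₀ + c * s' - (x₀ + c * s₀) = c * (s' - s₀) by ring, abs_mul]
    have h1 : |s' - s₀| < δ :=
      lt_of_lt_of_le hclose (by
        rw [hη_def]; exact div_le_self hδ.le (by linarith [abs_nonneg c]))
    have h2 : |c| * |s' - s₀| < δ := by
      calc |c| * |s' - s₀| ≤ (1 + |c|) * |s' - s₀| := by
            apply mul_le_mul_of_nonneg_right _ (abs_nonneg _); linarith
        _ < (1 + |c|) * η := mul_lt_mul_of_pos_left hclose hc1
        _ = δ := by rw [hη_def]; field_simp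
    -- Part A : variation in the time variable
    have hA : |f (t₀ - s') y - f T y + (s' - s₀) * K| ≤ ε' * |s' - s₀| := by
      set I : Set ℝ := uIcc T (t₀ - s') with hI_def
      have hI_sub : I ⊆ Ici (0:ℝ) := by
        intro τ hτ
        rw [hI_def, Set.mem_uIcc] at hτ
        rcases hτ with ⟨ha, _⟩ | ⟨ha, _⟩ <;> simp only [mem_Ici] <;> linarith
      have hderiv : ∀ τ ∈ I, HasDerivWithinAt (fun τ' => f τ' y - τ' * K)
          (ft τ y - K) I τ := by
        intro τ hτ
        have := ((hft τ (hI_sub hτ) y hX').mono hI_sub).sub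
          ((hasDerivWithinAt_id τ I).mul_const K)
        simp at this; exact this
      have hbound : ∀ τ ∈ I, ‖ft τ y - K‖ ≤ ε' := by
        intro τ hτ
        have hτt : |τ - T| ≤ |s' - s₀| := by
          rw [← habs_t]; exact abs_sub_le_of_mem_uIcc' hτ
        have hdist : dist ((τ, y) : ℝ × ℝ) (T, X) < δ₁ := by
          rw [Prod.dist_eq]
          apply max_lt
          · rw [Real.dist_eq]
            exact lt_of_le_of_lt hτt (lt_of_lt_of_le h1 (min_le_left _ _))
          · rw [Real.dist_eq, habs_x]
            exact lt_of_lt_of_le h2 (min_le_left _ _)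
        have := hδ₁' (Set.mem_prod.mpr ⟨hI_sub hτ, hX'⟩) hdist
        rw [Real.dist_eq] at this
        rw [Real.norm_eq_abs]
        exact this.le
      have := Convex.norm_image_sub_le_of_norm_hasDerivWithin_le hderiv hbound
        (convex_uIcc _ _) (left_mem_uIcc) (right_mem_uIcc)
      rw [Real.norm_eq_abs, Real.norm_eq_abs, habs_t] at this
      calc |f (t₀ - s') y - f T y + (s' - s₀) * K|
          = |(f (t₀ - s') y - (t₀ - s') * K) - (f T y - T * K)| := by
            congr 1; rw [hT_def]; ring
        _ ≤ ε' * |s' - s₀| := this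
    -- Part B : variation in the space variable
    have hB : |f T y - f T X - (y - X) * L| ≤ ε' * (|c| * |s' - s₀|) := by
      set J : Set ℝ := uIcc X y with hJ_def
      have hJ_sub : J ⊆ Icc (0:ℝ) 1 := uIcc_subset_Icc hX hX'
      have hderiv : ∀ y' ∈ J, HasDerivWithinAt (fun y'' => f T y'' - y'' * L)
          (fx T y' - L) J y' := by
        intro y' hy'
        have := ((hfx T hT y' (hJ_sub hy')).mono hJ_sub).sub
          ((hasDerivWithinAt_id y' J).mul_const L)
        simp at this; exact this
      have hbound : ∀ y' ∈ J, ‖fx T y' - L‖ ≤ ε' := by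
        intro y' hy'
        have hy'x : |y' - X| ≤ |c| * |s' - s₀| := by
          rw [← habs_x]; exact abs_sub_le_of_mem_uIcc' hy'
        have hdist : dist ((T, y') : ℝ × ℝ) (T, X) < δ₂ := by
          rw [Prod.dist_eq]
          apply max_lt
          · rw [Real.dist_eq]; simpa using lt_of_lt_of_le hδ (min_le_right _ _)
          · rw [Real.dist_eq]
            exact lt_of_le_of_lt hy'x (lt_of_lt_of_le h2 (min_le_right _ _))
        have := hδ₂' (Set.mem_prod.mpr ⟨Set.mem_Ici.mpr hT, hJ_sub hy'⟩) hdist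
        rw [Real.dist_eq] at this
        rw [Real.norm_eq_abs]
        exact this.le
      have := Convex.norm_image_sub_le_of_norm_hasDerivWithin_le hderiv hbound
        (convex_uIcc _ _) (left_mem_uIcc) (right_mem_uIcc)
      rw [Real.norm_eq_abs, Real.norm_eq_abs, habs_x] at this
      calc |f T y - f T X - (y - X) * L|
          = |(f T y - y * L) - (f T X - X * L)| := by congr 1; ring
        _ ≤ ε' * (|c| * |s' - s₀|) := this
    -- Combine
    have hyX : y - X = c * (s' - s₀) := by rw [hy_def, hX_def]; ring
    have hsplit : g s' - g s₀ - (s' - s₀) • (-K + c * L)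
        = (f (t₀ - s') y - f T y + (s' - s₀) * K) + (f T y - f T X - (y - X) * L) := by
      rw [smul_eq_mul, hyX]
      simp only [hg_def, ← hT_def, ← hX_def, ← hy_def]
      ring
    rw [Real.norm_eq_abs, Real.norm_eq_abs, hsplit]
    calc |(f (t₀ - s') y - f T y + (s' - s₀) * K) + (f T y - f T X - (y - X) * L)|
        ≤ ε' * |s' - s₀| + ε' * (|c| * |s' - s₀|) := (abs_add_le _ _).trans (add_le_add hA hB)
      _ = ε' * (1 + |c|) * |s' - s₀| := by ring
      _ = ε * |s' - s₀| := by rw [hε'_def]; field_simp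
  have hle : ‖g S - g 0‖ ≤ 0 * ‖S - (0:ℝ)‖ :=
    Convex.norm_image_sub_le_of_norm_hasDerivWithin_le (f' := fun _ => (0:ℝ)) (C := 0) hg
      (fun s hs => by simp) (convex_Icc 0 S)
      (⟨le_refl 0, hS⟩ : (0:ℝ) ∈ Icc (0:ℝ) S) (⟨hS, le_refl S⟩ : S ∈ Icc (0:ℝ) S)
  have h0 : g S = g 0 := by
    rw [zero_mul] at hle
    have := norm_le_zero_iff.mp hle
    linarith [sub_eq_zero.mp this]
  simpa [hg_def] using h0

/-- Finite-time stability of the 2×2 hyperbolic backstepping target system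
`α_t + λ α_x = 0`, `β_t − μ β_x = 0`, `α(t,0) = q β(t,0)`, `β(t,1) = 0`:
`β(t,x) = 0` for `t ≥ (1−x)/μ`, and `α ≡ β ≡ 0` for `t ≥ 1/λ + 1/μ`. -/
theorem two_by_two_target_finite_time
    (lam mu q : ℝ) (hlam : 0 < lam) (hmu : 0 < mu)
    (α β αt αx βt βx : ℝ → ℝ → ℝ)
    -- α and β are continuously differentiable on [0,∞) × [0,1]
    (hαt : ∀ t : ℝ, 0 ≤ t → ∀ x ∈ Icc (0:ℝ) 1,
      HasDerivWithinAt (fun s => α s x) (αt t x) (Ici 0) t)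
    (hαx : ∀ t : ℝ, 0 ≤ t → ∀ x ∈ Icc (0:ℝ) 1,
      HasDerivWithinAt (fun y => α t y) (αx t x) (Icc 0 1) x)
    (hβt : ∀ t : ℝ, 0 ≤ t → ∀ x ∈ Icc (0:ℝ) 1,
      HasDerivWithinAt (fun s => β s x) (βt t x) (Ici 0) t)
    (hβx : ∀ t : ℝ, 0 ≤ t → ∀ x ∈ Icc (0:ℝ) 1,
      HasDerivWithinAt (fun y => β t y) (βx t x) (Icc 0 1) x)
    (hαt_cont : ContinuousOn (fun p : ℝ × ℝ => αt p.1 p.2) (Ici 0 ×ˢ Icc 0 1))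
    (hαx_cont : ContinuousOn (fun p : ℝ × ℝ => αx p.1 p.2) (Ici 0 ×ˢ Icc 0 1))
    (hβt_cont : ContinuousOn (fun p : ℝ × ℝ => βt p.1 p.2) (Ici 0 ×ˢ Icc 0 1))
    (hβx_cont : ContinuousOn (fun p : ℝ × ℝ => βx p.1 p.2) (Ici 0 ×ˢ Icc 0 1))
    -- the transport equations  α_t + λ α_x = 0  and  β_t − μ β_x = 0
    (hα_pde : ∀ t : ℝ, 0 ≤ t → ∀ x ∈ Icc (0:ℝ) 1, αt t x + lam * αx t x = 0)
    (hβ_pde : ∀ t : ℝ, 0 ≤ t → ∀ x ∈ Icc (0:ℝ) 1, βt t x - mu * βx t x = 0)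
    -- the boundary conditions  α(t,0) = q β(t,0)  and  β(t,1) = 0
    (hbc0 : ∀ t : ℝ, 0 ≤ t → α t 0 = q * β t 0)
    (hbc1 : ∀ t : ℝ, 0 ≤ t → β t 1 = 0) :
    (∀ t : ℝ, ∀ x ∈ Icc (0:ℝ) 1, (1 - x) / mu ≤ t → β t x = 0) ∧
    (∀ t : ℝ, 1 / lam + 1 / mu ≤ t → ∀ x ∈ Icc (0:ℝ) 1, α t x = 0 ∧ β t x = 0) := by
  have hβ_pde' : ∀ t : ℝ, 0 ≤ t → ∀ x ∈ Icc (0:ℝ) 1, βt t x = mu * βx t x := by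
    intro t ht x hx; linarith [hβ_pde t ht x hx]
  have hα_pde' : ∀ t : ℝ, 0 ≤ t → ∀ x ∈ Icc (0:ℝ) 1, αt t x = (-lam) * αx t x := by
    intro t ht x hx; linarith [hα_pde t ht x hx]
  have hβzero : ∀ t : ℝ, ∀ x ∈ Icc (0:ℝ) 1, (1 - x) / mu ≤ t → β t x = 0 := by
    intro t x hx ht
    set S : ℝ := (1 - x) / mu with hS_def
    have hS : 0 ≤ S := div_nonneg (by linarith [hx.2]) hmu.le
    have hmuS : x + mu * S = 1 := by rw [hS_def]; field_simp; ring
    have hconst := const_along_char β βt βx mu hβt hβx hβt_cont hβx_cont hβ_pde'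
      t x S hS (by
        intro s hs
        constructor
        · linarith [hs.2]
        · constructor
          · have : 0 ≤ mu * s := mul_nonneg hmu.le hs.1
            linarith [hx.1]
          · have : mu * s ≤ mu * S := mul_le_mul_of_nonneg_left hs.2 hmu.le
            linarith)
    rw [hmuS] at hconst
    rw [← hconst, hbc1 (t - S) (by linarith)]
  refine ⟨hβzero, ?_⟩
  intro t ht x hx
  have ht0 : (0:ℝ) ≤ t := le_trans (by positivity) ht
  have hβx0 : β t x = 0 := by
    apply hβzero t x hx
    calc (1 - x) / mu ≤ 1 / mu := by
          gcongr
          linarith [hx.1]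
      _ ≤ t := by
          have : 0 < 1 / lam := by positivity
          linarith
  refine ⟨?_, hβx0⟩
  -- α part
  set S : ℝ := x / lam with hS_def
  have hS : 0 ≤ S := div_nonneg hx.1 hlam.le
  have hlamS : x + (-lam) * S = 0 := by rw [hS_def]; field_simp; ring
  have hfrac : S ≤ 1 / lam := by
    rw [hS_def, div_le_div_iff₀ hlam (by positivity)]
    nlinarith [hx.2, hlam]
  have hconst := const_along_char α αt αx (-lam) hαt hαx hαt_cont hαx_cont hα_pde'
    t x S hS (by
      intro s hs
      constructor
      · have : s ≤ 1 / lam := le_trans hs.2 hfrac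
        have : 0 < 1 / mu := by positivity
        linarith
      · constructor
        · have h1 : lam * s ≤ lam * S := mul_le_mul_of_nonneg_left hs.2 hlam.le
          have h2 : lam * S = x := by rw [hS_def]; field_simp
          simp only [neg_mul]
          linarith
        · have : 0 ≤ lam * s := mul_nonneg hlam.le hs.1
          simp only [neg_mul]
          linarith [hx.2])
  rw [hlamS] at hconst
  have htS0 : (0:ℝ) ≤ t - S := by
    have : 0 < 1 / mu := by positivity
    linarith [hfrac]
  rw [← hconst, hbc0 (t - S) htS0]
  have : β (t - S) 0 = 0 := by
    apply hβzero (t - S) 0 ⟨le_refl 0, by norm_num⟩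
    simp only [sub_zero]
    linarith [hfrac]
  rw [this, mul_zero]
end
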